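/- arXiv:2207.06320 — 4 statements merged into one kernel-verified Lean document; each statement's English description precedes it below -/
import Mathlib

section
/- For any minimizer β̂_n of D_{n,2}, ∫ (F^Y_n(y) − n^{-1} Σ_{i=1}^n F^ε(y − β̂_n^T X_i))² dF^Y_n(y) = O_P(n^{-1}); moreover the same O_P(n^{-1}) bound holds with F^Y in place of F^Y_n inside the square, and in particular D_{n,2}(β_0) = O_P(n^{-1}). -/
open MeasureTheory ProbabilityTheory Filter Matrix
open scoped ENNReal NNReal Topology

noncomputable section

/-- The Euclidean norm of a vector in `Fin d → ℝ`. -/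
def vnorm {d : ℕ} (v : Fin d → ℝ) : ℝ := Real.sqrt (∑ i, v i ^ 2)

/-- The norm `‖x‖_{2,Γ} = √(xᵀ Γ x)` associated with a matrix `Γ`. -/
def mnorm {d : ℕ} (Γ : Matrix (Fin d) (Fin d) ℝ) (x : Fin d → ℝ) : ℝ :=
  Real.sqrt (x ⬝ᵥ Γ *ᵥ x)

/-- The cumulative distribution function of a measure on `ℝ`. -/
def cdfOf (μ : Measure ℝ) (y : ℝ) : ℝ := (μ (Set.Iic y)).toReal

/-- The empirical CDF of the sample `Y 0 ω, …, Y (n-1) ω`. -/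
def empCDF {Ω : Type*} (n : ℕ) (Y : ℕ → Ω → ℝ) (ω : Ω) (y : ℝ) : ℝ :=
  (n : ℝ)⁻¹ * ∑ i ∈ Finset.range n, if Y i ω ≤ y then (1 : ℝ) else 0

/-- The empirical deconvolution criterion `D_{n,p}(β)`. -/
def Dnp {Ω : Type*} {d : ℕ} (Feps : ℝ → ℝ) (p n : ℕ) (Y : ℕ → Ω → ℝ)
    (X : ℕ → Ω → Fin d → ℝ) (ω : Ω) (β : Fin d → ℝ) : ℝ :=
  (n : ℝ)⁻¹ * ∑ j ∈ Finset.range n,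
    |empCDF n Y ω (Y j ω) - (n : ℝ)⁻¹ * ∑ i ∈ Finset.range n, Feps (Y j ω - β ⬝ᵥ X i ω)| ^ p

/-- The population criterion `D_{2,F^Y}(β)`. -/
def Dpop {d : ℕ} (Feps : ℝ → ℝ) (μX : Measure (Fin d → ℝ)) (μY : Measure ℝ)
    (β : Fin d → ℝ) : ℝ :=
  ∫ y, (cdfOf μY y - ∫ x, Feps (y - β ⬝ᵥ x) ∂μX) ^ 2 ∂μY

/-- `Z 0, Z 1, …` is an i.i.d. sample from the distribution `μ`. -/
def IsIIDSample {Ω : Type*} [MeasureSpace Ω] {E : Type*} [MeasurableSpace E]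
    (Z : ℕ → Ω → E) (μ : Measure E) : Prop :=
  (∀ i, Measurable (Z i)) ∧ (∀ i, Measure.map (Z i) ℙ = μ) ∧
    iIndepFun Z ℙ

/-- The unlinked linear regression model: `Y =d β₀ᵀ X + ε`. -/
def UnlinkedModel {d : ℕ} (μX : Measure (Fin d → ℝ)) (μeps : Measure ℝ)
    (β₀ : Fin d → ℝ) (μY : Measure ℝ) : Prop :=
  μY = Measure.map (fun q : (Fin d → ℝ) × ℝ => β₀ ⬝ᵥ q.1 + q.2) (μX.prod μeps)

/-- The set `B₀` of vectors `β` such that `βᵀX` has the same distribution as `β₀ᵀX`. -/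
def B0set {d : ℕ} (μX : Measure (Fin d → ℝ)) (β₀ : Fin d → ℝ) : Set (Fin d → ℝ) :=
  {β | Measure.map (fun x => β ⬝ᵥ x) μX = Measure.map (fun x => β₀ ⬝ᵥ x) μX}

lemma cdfOf_mono (μ : Measure ℝ) [IsFiniteMeasure μ] : Monotone (cdfOf μ) := fun a b hab =>
  ENNReal.toReal_mono (measure_ne_top _ _) (measure_mono (Set.Iic_subset_Iic.2 hab))

lemma measurable_cdfOf (μ : Measure ℝ) [IsFiniteMeasure μ] : Measurable (cdfOf μ) :=
  (cdfOf_mono μ).measurable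

lemma cdfOf_nonneg (μ : Measure ℝ) (y : ℝ) : 0 ≤ cdfOf μ y := ENNReal.toReal_nonneg

lemma cdfOf_le_one (μ : Measure ℝ) [IsProbabilityMeasure μ] (y : ℝ) : cdfOf μ y ≤ 1 := by
  have h : μ (Set.Iic y) ≤ 1 := prob_le_one
  simpa [cdfOf] using ENNReal.toReal_mono ENNReal.one_ne_top h

lemma integral_indicator_cdf (μ : Measure ℝ) [IsProbabilityMeasure μ] (c : ℝ) :
    ∫ a, (if a ≤ c then (1:ℝ) else 0) ∂μ = cdfOf μ c := by
  have h : (fun a => if a ≤ c then (1:ℝ) else 0)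
      = Set.indicator (Set.Iic c) (fun _ => (1:ℝ)) := by
    funext a; simp [Set.indicator_apply, Set.mem_Iic]
  rw [h, integral_indicator_const (1:ℝ) measurableSet_Iic, smul_eq_mul, mul_one, cdfOf]
  rfl

lemma measurable_dot {d : ℕ} (β : Fin d → ℝ) : Measurable fun x : Fin d → ℝ => β ⬝ᵥ x := by
  simp only [dotProduct]
  exact Finset.measurable_sum _ fun i _ => (measurable_pi_apply i).const_mul _

lemma model_cdf {d : ℕ} {μX : Measure (Fin d → ℝ)} {μeps μY : Measure ℝ}
    [IsProbabilityMeasure μX] [IsProbabilityMeasure μeps] {β₀ : Fin d → ℝ}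
    (hmodel : UnlinkedModel μX μeps β₀ μY) (c : ℝ) :
    ∫ x, cdfOf μeps (c - β₀ ⬝ᵥ x) ∂μX = cdfOf μY c := by
  have hmeas : Measurable fun q : (Fin d → ℝ) × ℝ => β₀ ⬝ᵥ q.1 + q.2 :=
    ((measurable_dot β₀).comp measurable_fst).add measurable_snd
  have hset : MeasurableSet {q : (Fin d → ℝ) × ℝ | β₀ ⬝ᵥ q.1 + q.2 ≤ c} :=
    measurableSet_le hmeas measurable_const
  have h1 : μY (Set.Iic c) = (μX.prod μeps) {q : (Fin d → ℝ) × ℝ | β₀ ⬝ᵥ q.1 + q.2 ≤ c} := by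
    rw [hmodel, Measure.map_apply hmeas measurableSet_Iic]
    rfl
  have h2 : (μX.prod μeps) {q : (Fin d → ℝ) × ℝ | β₀ ⬝ᵥ q.1 + q.2 ≤ c}
      = ∫⁻ x, μeps (Set.Iic (c - β₀ ⬝ᵥ x)) ∂μX := by
    rw [Measure.prod_apply hset]
    congr 1
    funext x
    congr 1
    ext e
    simp only [Set.mem_preimage, Set.mem_setOf_eq, Set.mem_Iic]
    constructor <;> intro h <;> linarith
  have hmono : Monotone fun t : ℝ => μeps (Set.Iic t) := fun a b hab =>
    measure_mono (Set.Iic_subset_Iic.2 hab)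
  have hm : Measurable fun x : Fin d → ℝ => μeps (Set.Iic (c - β₀ ⬝ᵥ x)) :=
    hmono.measurable.comp (measurable_const.sub (measurable_dot β₀))
  simp only [cdfOf, h1, h2]
  rw [← integral_toReal hm.aemeasurable (ae_of_all _ fun x => measure_lt_top _ _)]

lemma map_pair_indep {Ω : Type*} [MeasureSpace Ω] [IsProbabilityMeasure (ℙ : Measure Ω)]
    {E F : Type*} [MeasurableSpace E] [MeasurableSpace F]
    {f : Ω → E} {g : Ω → F} (hf : Measurable f) (hg : Measurable g)
    (h : IndepFun f g ℙ) :
    Measure.map (fun ω => (f ω, g ω)) ℙ = (Measure.map f ℙ).prod (Measure.map g ℙ) :=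
  (indepFun_iff_map_prod_eq_prod_map_map hf.aemeasurable hg.aemeasurable).1 h

lemma integral_prod_cross {E : Type*} [MeasurableSpace E] (μ : Measure E) (ν : Measure ℝ)
    [IsProbabilityMeasure μ] [IsProbabilityMeasure ν]
    (g : E → ℝ → ℝ) (hg : Measurable (Function.uncurry g))
    (hbd : ∀ x c, |g x c| ≤ 1) (hzero : ∀ c, ∫ x, g x c ∂μ = 0) :
    ∫ p : (E × E) × ℝ, g p.1.1 p.2 * g p.1.2 p.2 ∂((μ.prod μ).prod ν) = 0 := by
  have hH : Measurable fun p : (E × E) × ℝ => g p.1.1 p.2 * g p.1.2 p.2 :=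
    (hg.comp ((measurable_fst.comp measurable_fst).prodMk measurable_snd)).mul
      (hg.comp ((measurable_snd.comp measurable_fst).prodMk measurable_snd))
  have hint : Integrable (fun p : (E × E) × ℝ => g p.1.1 p.2 * g p.1.2 p.2)
      ((μ.prod μ).prod ν) := by
    refine (integrable_const (1:ℝ)).mono' hH.aestronglyMeasurable (ae_of_all _ fun p => ?_)
    simp only [Real.norm_eq_abs, abs_mul]
    calc |g p.1.1 p.2| * |g p.1.2 p.2| ≤ 1 * 1 :=
      mul_le_mul (hbd _ _) (hbd _ _) (abs_nonneg _) zero_le_one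
    _ = 1 := by ring
  rw [integral_prod_symm _ hint]
  have h1 : ∀ c : ℝ, ∫ w : E × E, g w.1 c * g w.2 c ∂(μ.prod μ) = 0 := by
    intro c
    rw [integral_prod_mul (fun x => g x c) (fun x => g x c), hzero c, mul_zero]
  simp only [h1, integral_zero]

lemma markov_bound {Ω : Type*} [MeasureSpace Ω] [IsProbabilityMeasure (ℙ : Measure Ω)]
    (f : Ω → ℝ) (hf : Integrable f ℙ) (hnn : ∀ ω, 0 ≤ f ω) (C : ℝ)
    (hC : ∫ ω, f ω ∂ℙ ≤ C) {M : ℝ} (hM : 0 < M) :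
    ℙ {ω | M ≤ f ω} ≤ ENNReal.ofReal (C / M) := by
  have h : M * (ℙ {ω | M ≤ f ω}).toReal ≤ ∫ ω, f ω ∂ℙ :=
    mul_meas_ge_le_integral_of_nonneg (ae_of_all _ hnn) hf M
  have h2 : (ℙ {ω | M ≤ f ω}).toReal ≤ C / M := by
    rw [le_div_iff₀ hM]
    nlinarith [h, hC]
  calc ℙ {ω | M ≤ f ω} = ENNReal.ofReal (ℙ {ω | M ≤ f ω}).toReal :=
        (ENNReal.ofReal_toReal (measure_ne_top _ _)).symm
    _ ≤ ENNReal.ofReal (C / M) := ENNReal.ofReal_le_ofReal h2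

lemma ind_le_three (P Q R : Prop) [Decidable P] [Decidable Q] [Decidable R] :
    (if P ∨ Q ∨ R then (1:ℝ) else 0)
      ≤ (if P then 1 else 0) + (if Q then 1 else 0) + (if R then 1 else 0) := by
  by_cases hP : P <;> by_cases hQ : Q <;> by_cases hR : R <;> simp [hP, hQ, hR] <;> norm_num

lemma u_cov_zero {Ω : Type*} [MeasureSpace Ω] [IsProbabilityMeasure (ℙ : Measure Ω)]
    (μY : Measure ℝ) [IsProbabilityMeasure μY] (Y : ℕ → Ω → ℝ)
    (hYm : ∀ i, Measurable (Y i)) (hYlaw : ∀ i, Measure.map (Y i) ℙ = μY)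
    (hYindep : iIndepFun Y ℙ)
    (i k j : ℕ) (hik : i ≠ k) (hij : i ≠ j) (hkj : k ≠ j) :
    ∫ ω, ((if Y i ω ≤ Y j ω then (1:ℝ) else 0) - cdfOf μY (Y j ω))
        * ((if Y k ω ≤ Y j ω then (1:ℝ) else 0) - cdfOf μY (Y j ω)) ∂ℙ = 0 := by
  set g : ℝ → ℝ → ℝ := fun a c => (if a ≤ c then (1:ℝ) else 0) - cdfOf μY c with hgdef
  have hg : Measurable (Function.uncurry g) := by
    apply Measurable.sub
    · exact Measurable.ite (measurableSet_le measurable_fst measurable_snd)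
        measurable_const measurable_const
    · exact (measurable_cdfOf μY).comp measurable_snd
  have hgb : ∀ a c, |g a c| ≤ 1 := by
    intro a c
    have h1 := cdfOf_nonneg μY c
    have h2 := cdfOf_le_one μY c
    rw [abs_le]
    constructor <;> simp only [hgdef] <;> split_ifs <;> simp <;> linarith
  have hgz : ∀ c, ∫ a, g a c ∂μY = 0 := by
    intro c
    have hindm : Measurable fun a : ℝ => if a ≤ c then (1:ℝ) else 0 :=
      Measurable.ite (measurableSet_le measurable_id measurable_const)
        measurable_const measurable_const
    have hind : Integrable (fun a => if a ≤ c then (1:ℝ) else 0) μY := by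
      refine (integrable_const (1:ℝ)).mono' hindm.aestronglyMeasurable (ae_of_all _ fun a => ?_)
      split_ifs <;> simp
    simp only [hgdef]
    rw [integral_sub hind (integrable_const _), integral_indicator_cdf, integral_const]
    simp
  have hpair : Measure.map (fun ω => (Y i ω, Y k ω)) ℙ = μY.prod μY := by
    rw [map_pair_indep (hYm i) (hYm k) (hYindep.indepFun hik), hYlaw i, hYlaw k]
  have htrip : Measure.map (fun ω => ((Y i ω, Y k ω), Y j ω)) ℙ = (μY.prod μY).prod μY := by
    rw [map_pair_indep ((hYm i).prodMk (hYm k)) (hYm j)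
      (hYindep.indepFun_prodMk hYm i k j hij hkj), hpair, hYlaw j]
  have hH : Measurable fun p : (ℝ × ℝ) × ℝ => g p.1.1 p.2 * g p.1.2 p.2 :=
    (hg.comp ((measurable_fst.comp measurable_fst).prodMk measurable_snd)).mul
      (hg.comp ((measurable_snd.comp measurable_fst).prodMk measurable_snd))
  have hT : Measurable fun ω => ((Y i ω, Y k ω), Y j ω) :=
    ((hYm i).prodMk (hYm k)).prodMk (hYm j)
  calc ∫ ω, ((if Y i ω ≤ Y j ω then (1:ℝ) else 0) - cdfOf μY (Y j ω))
        * ((if Y k ω ≤ Y j ω then (1:ℝ) else 0) - cdfOf μY (Y j ω)) ∂ℙ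
      = ∫ p : (ℝ × ℝ) × ℝ, g p.1.1 p.2 * g p.1.2 p.2 ∂((μY.prod μY).prod μY) := by
        rw [← htrip, integral_map hT.aemeasurable hH.aestronglyMeasurable]
    _ = 0 := integral_prod_cross μY μY g hg hgb hgz

lemma v_cov_zero {Ω : Type*} [MeasureSpace Ω] [IsProbabilityMeasure (ℙ : Measure Ω)]
    {d : ℕ} (μX : Measure (Fin d → ℝ)) (μeps μY : Measure ℝ)
    [IsProbabilityMeasure μX] [IsProbabilityMeasure μeps] [IsProbabilityMeasure μY]
    (β₀ : Fin d → ℝ) (hmodel : UnlinkedModel μX μeps β₀ μY)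
    (X : ℕ → Ω → Fin d → ℝ) (Y : ℕ → Ω → ℝ)
    (hXm : ∀ i, Measurable (X i)) (hXlaw : ∀ i, Measure.map (X i) ℙ = μX)
    (hXindep : iIndepFun X ℙ)
    (hYm : ∀ i, Measurable (Y i)) (hYlaw : ∀ i, Measure.map (Y i) ℙ = μY)
    (hindep : IndepFun (fun ω => fun i => Y i ω) (fun ω => fun i => X i ω) ℙ)
    (i k j : ℕ) (hik : i ≠ k) :
    ∫ ω, (cdfOf μY (Y j ω) - cdfOf μeps (Y j ω - β₀ ⬝ᵥ X i ω))
        * (cdfOf μY (Y j ω) - cdfOf μeps (Y j ω - β₀ ⬝ᵥ X k ω)) ∂ℙ = 0 := by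
  set g : (Fin d → ℝ) → ℝ → ℝ := fun x c => cdfOf μY c - cdfOf μeps (c - β₀ ⬝ᵥ x) with hgdef
  have hg : Measurable (Function.uncurry g) :=
    ((measurable_cdfOf μY).comp measurable_snd).sub
      ((measurable_cdfOf μeps).comp (measurable_snd.sub ((measurable_dot β₀).comp measurable_fst)))
  have hgb : ∀ x c, |g x c| ≤ 1 := by
    intro x c
    have h1 := cdfOf_nonneg μY c
    have h2 := cdfOf_le_one μY c
    have h3 := cdfOf_nonneg μeps (c - β₀ ⬝ᵥ x)
    have h4 := cdfOf_le_one μeps (c - β₀ ⬝ᵥ x)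
    rw [abs_le]; constructor <;> simp only [hgdef] <;> linarith
  have hgz : ∀ c, ∫ x, g x c ∂μX = 0 := by
    intro c
    have hFem : Measurable fun x : Fin d → ℝ => cdfOf μeps (c - β₀ ⬝ᵥ x) :=
      (measurable_cdfOf μeps).comp (measurable_const.sub (measurable_dot β₀))
    have hFei : Integrable (fun x : Fin d → ℝ => cdfOf μeps (c - β₀ ⬝ᵥ x)) μX := by
      refine (integrable_const (1:ℝ)).mono' hFem.aestronglyMeasurable (ae_of_all _ fun x => ?_)
      simp only [Real.norm_eq_abs, abs_le]
      exact ⟨by linarith [cdfOf_nonneg μeps (c - β₀ ⬝ᵥ x)], cdfOf_le_one μeps _⟩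
    simp only [hgdef]
    rw [integral_sub (integrable_const _) hFei, integral_const, model_cdf hmodel c]
    simp
  have hpairX : Measure.map (fun ω => (X i ω, X k ω)) ℙ = μX.prod μX := by
    rw [map_pair_indep (hXm i) (hXm k) (hXindep.indepFun hik), hXlaw i, hXlaw k]
  have hindepXY : IndepFun (fun ω => (X i ω, X k ω)) (Y j) ℙ :=
    (hindep.comp (measurable_pi_apply j)
      ((measurable_pi_apply i).prodMk (measurable_pi_apply k))).symm
  have htrip : Measure.map (fun ω => ((X i ω, X k ω), Y j ω)) ℙ = (μX.prod μX).prod μY := by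
    rw [map_pair_indep ((hXm i).prodMk (hXm k)) (hYm j) hindepXY, hpairX, hYlaw j]
  have hH : Measurable fun p : ((Fin d → ℝ) × (Fin d → ℝ)) × ℝ => g p.1.1 p.2 * g p.1.2 p.2 :=
    (hg.comp ((measurable_fst.comp measurable_fst).prodMk measurable_snd)).mul
      (hg.comp ((measurable_snd.comp measurable_fst).prodMk measurable_snd))
  have hT : Measurable fun ω => ((X i ω, X k ω), Y j ω) :=
    ((hXm i).prodMk (hXm k)).prodMk (hYm j)
  calc ∫ ω, (cdfOf μY (Y j ω) - cdfOf μeps (Y j ω - β₀ ⬝ᵥ X i ω))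
        * (cdfOf μY (Y j ω) - cdfOf μeps (Y j ω - β₀ ⬝ᵥ X k ω)) ∂ℙ
      = ∫ p : ((Fin d → ℝ) × (Fin d → ℝ)) × ℝ, g p.1.1 p.2 * g p.1.2 p.2
          ∂((μX.prod μX).prod μY) := by
        rw [← htrip, integral_map hT.aemeasurable hH.aestronglyMeasurable]
    _ = 0 := integral_prod_cross μX μY g hg hgb hgz

lemma sq_avg_expectation_bound {Ω : Type*} [MeasureSpace Ω] [IsProbabilityMeasure (ℙ : Measure Ω)]
    (n : ℕ) (hn : 1 ≤ n) (j : ℕ) (w : ℕ → Ω → ℝ)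
    (hm : ∀ i, Measurable (w i)) (hb : ∀ i ω, |w i ω| ≤ 1)
    (hzero : ∀ i k, i ≠ k → i ≠ j → k ≠ j → ∫ ω, w i ω * w k ω ∂ℙ = 0) :
    ∫ ω, ((n:ℝ)⁻¹ * ∑ i ∈ Finset.range n, w i ω)^2 ∂ℙ ≤ 3 / n := by
  have hn0 : (0:ℝ) < n := by exact_mod_cast hn
  have hint : ∀ i k, Integrable (fun ω => w i ω * w k ω) ℙ := by
    intro i k
    refine (integrable_const (1:ℝ)).mono'
      ((hm i).mul (hm k)).aestronglyMeasurable (ae_of_all _ fun ω => ?_)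
    simp only [Real.norm_eq_abs, abs_mul]
    calc |w i ω| * |w k ω| ≤ 1 * 1 := mul_le_mul (hb _ _) (hb _ _) (abs_nonneg _) zero_le_one
      _ = 1 := by ring
  have hpt : ∀ ω, ((n:ℝ)⁻¹ * ∑ i ∈ Finset.range n, w i ω)^2
      = (n:ℝ)⁻¹^2 * ∑ i ∈ Finset.range n, ∑ k ∈ Finset.range n, w i ω * w k ω := by
    intro ω
    rw [mul_pow]
    congr 1
    rw [sq, Finset.sum_mul_sum]
  have hI : ∫ ω, ((n:ℝ)⁻¹ * ∑ i ∈ Finset.range n, w i ω)^2 ∂ℙ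
      = (n:ℝ)⁻¹^2 * ∑ i ∈ Finset.range n, ∑ k ∈ Finset.range n, ∫ ω, w i ω * w k ω ∂ℙ := by
    simp only [hpt]
    rw [integral_const_mul]
    congr 1
    rw [integral_finset_sum _ fun i _ => integrable_finset_sum _ fun k _ => hint i k]
    exact Finset.sum_congr rfl fun i _ => integral_finset_sum _ fun k _ => hint i k
  have hterm : ∀ i k, ∫ ω, w i ω * w k ω ∂ℙ
      ≤ (if i = k ∨ i = j ∨ k = j then (1:ℝ) else 0) := by
    intro i k
    by_cases hbad : i = k ∨ i = j ∨ k = j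
    · rw [if_pos hbad]
      have h := norm_integral_le_of_norm_le_const (C := 1) (μ := (ℙ : Measure Ω))
        (f := fun ω => w i ω * w k ω) (ae_of_all _ fun ω => ?_)
      · calc ∫ ω, w i ω * w k ω ∂ℙ ≤ ‖∫ ω, w i ω * w k ω ∂ℙ‖ := le_abs_self _
          _ ≤ 1 * (ℙ Set.univ).toReal := h
          _ = 1 := by simp
      · simp only [Real.norm_eq_abs, abs_mul]
        calc |w i ω| * |w k ω| ≤ 1 * 1 := mul_le_mul (hb _ _) (hb _ _) (abs_nonneg _) zero_le_one
          _ = 1 := by ring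
    · push_neg at hbad
      rw [if_neg (by tauto), hzero i k hbad.1 hbad.2.1 hbad.2.2]
  have hsum : ∑ i ∈ Finset.range n, ∑ k ∈ Finset.range n, ∫ ω, w i ω * w k ω ∂ℙ
      ≤ 3 * n := by
    calc ∑ i ∈ Finset.range n, ∑ k ∈ Finset.range n, ∫ ω, w i ω * w k ω ∂ℙ
        ≤ ∑ i ∈ Finset.range n, ∑ k ∈ Finset.range n,
            (if i = k ∨ i = j ∨ k = j then (1:ℝ) else 0) :=
          Finset.sum_le_sum fun i _ => Finset.sum_le_sum fun k _ => hterm i k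
      _ ≤ ∑ i ∈ Finset.range n, ∑ k ∈ Finset.range n,
            ((if i = k then (1:ℝ) else 0) + (if i = j then 1 else 0) + (if k = j then 1 else 0)) :=
          Finset.sum_le_sum fun i _ => Finset.sum_le_sum fun k _ => ind_le_three _ _ _
      _ ≤ 3 * n := by
          simp only [Finset.sum_add_distrib]
          have hA : (∑ i ∈ Finset.range n, ∑ k ∈ Finset.range n, if i = k then (1:ℝ) else 0) ≤ n := by
            have h : ∀ i ∈ Finset.range n,
                (∑ k ∈ Finset.range n, if i = k then (1:ℝ) else 0) ≤ 1 := by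
              intro i _
              rw [Finset.sum_ite_eq]
              split_ifs <;> norm_num
            calc (∑ i ∈ Finset.range n, ∑ k ∈ Finset.range n, if i = k then (1:ℝ) else 0)
                ≤ ∑ _i ∈ Finset.range n, (1:ℝ) := Finset.sum_le_sum h
              _ = n := by simp
          have hB : (∑ i ∈ Finset.range n, ∑ k ∈ Finset.range n, if i = j then (1:ℝ) else 0) ≤ n := by
            have h : ∀ i, (∑ k ∈ Finset.range n, if i = j then (1:ℝ) else 0)
                = (n:ℝ) * (if i = j then (1:ℝ) else 0) := by
              intro i
              rw [Finset.sum_const, Finset.card_range, nsmul_eq_mul]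
            simp only [h, ← Finset.mul_sum]
            have h2 : (∑ i ∈ Finset.range n, if i = j then (1:ℝ) else 0) ≤ 1 := by
              rw [Finset.sum_ite_eq']
              split_ifs <;> norm_num
            have h3 : (0:ℝ) ≤ ∑ i ∈ Finset.range n, if i = j then (1:ℝ) else 0 :=
              Finset.sum_nonneg fun i _ => by split_ifs <;> norm_num
            nlinarith
          have hC : (∑ i ∈ Finset.range n, ∑ k ∈ Finset.range n, if k = j then (1:ℝ) else 0) ≤ n := by
            have h : ∀ i ∈ Finset.range n,
                (∑ k ∈ Finset.range n, if k = j then (1:ℝ) else 0) ≤ 1 := by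
              intro i _
              rw [Finset.sum_ite_eq']
              split_ifs <;> norm_num
            calc (∑ i ∈ Finset.range n, ∑ k ∈ Finset.range n, if k = j then (1:ℝ) else 0)
                ≤ ∑ _i ∈ Finset.range n, (1:ℝ) := Finset.sum_le_sum h
              _ = n := by simp
          linarith
  calc ∫ ω, ((n:ℝ)⁻¹ * ∑ i ∈ Finset.range n, w i ω)^2 ∂ℙ
      = (n:ℝ)⁻¹^2 * ∑ i ∈ Finset.range n, ∑ k ∈ Finset.range n, ∫ ω, w i ω * w k ω ∂ℙ := hI
    _ ≤ (n:ℝ)⁻¹^2 * (3 * n) := by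
        apply mul_le_mul_of_nonneg_left hsum (by positivity)
    _ = 3 / n := by field_simp

lemma avg_sq_le_one {Ω : Type*} (n : ℕ) (f : ℕ → Ω → ℝ) (hb : ∀ i ω, |f i ω| ≤ 1) (ω : Ω) :
    ((n:ℝ)⁻¹ * ∑ i ∈ Finset.range n, f i ω)^2 ≤ 1 := by
  have h1 : |∑ i ∈ Finset.range n, f i ω| ≤ n := by
    refine (Finset.abs_sum_le_sum_abs _ _).trans ?_
    calc ∑ i ∈ Finset.range n, |f i ω| ≤ ∑ _i ∈ Finset.range n, (1:ℝ) :=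
        Finset.sum_le_sum fun i _ => hb i ω
      _ = n := by simp
  have h2 : |(n:ℝ)⁻¹ * ∑ i ∈ Finset.range n, f i ω| ≤ 1 := by
    rcases Nat.eq_zero_or_pos n with h | h
    · subst h; simp
    · have hn0 : (0:ℝ) < n := by exact_mod_cast h
      rw [abs_mul, abs_inv, abs_of_nonneg hn0.le, inv_mul_le_iff₀ hn0, mul_one]
      exact h1
  calc ((n:ℝ)⁻¹ * ∑ i ∈ Finset.range n, f i ω)^2
      = |(n:ℝ)⁻¹ * ∑ i ∈ Finset.range n, f i ω|^2 := (sq_abs _).symm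
    _ ≤ 1^2 := pow_le_pow_left₀ (abs_nonneg _) h2 2
    _ = 1 := one_pow 2

lemma integrable_avg_sq {Ω : Type*} [MeasureSpace Ω] [IsProbabilityMeasure (ℙ : Measure Ω)]
    (n : ℕ) (f : ℕ → Ω → ℝ) (hm : ∀ i, Measurable (f i)) (hb : ∀ i ω, |f i ω| ≤ 1) :
    Integrable (fun ω => ((n:ℝ)⁻¹ * ∑ i ∈ Finset.range n, f i ω)^2) ℙ := by
  have hmeas : Measurable fun ω => ((n:ℝ)⁻¹ * ∑ i ∈ Finset.range n, f i ω)^2 :=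
    ((measurable_const.mul (Finset.measurable_sum _ fun i _ => hm i)).pow measurable_const)
  refine (integrable_const (1:ℝ)).mono' hmeas.aestronglyMeasurable (ae_of_all _ fun ω => ?_)
  rw [Real.norm_eq_abs, abs_of_nonneg (sq_nonneg _)]
  exact avg_sq_le_one n f hb ω

/-- **Rate of the minimal criterion.**  For any minimizer `β̂ₙ` of `D_{n,2}`,
`D_{n,2}(β̂ₙ) = O_P(n⁻¹)`; the same bound holds with the true CDF `F^Y` in place of the
empirical CDF inside the square, and `D_{n,2}(β₀) = O_P(n⁻¹)`. -/
theorem criterion_rate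
    {Ω : Type*} [MeasureSpace Ω] [IsProbabilityMeasure (ℙ : Measure Ω)]
    {d : ℕ} (μX : Measure (Fin d → ℝ)) (μeps μY : Measure ℝ)
    [IsProbabilityMeasure μX] [IsProbabilityMeasure μeps]
    (β₀ : Fin d → ℝ) (hmodel : UnlinkedModel μX μeps β₀ μY)
    (feps : ℝ → ℝ) (hfnonneg : ∀ t, 0 ≤ feps t)
    (hdensity : μeps = volume.withDensity fun t => ENNReal.ofReal (feps t))
    (X : ℕ → Ω → Fin d → ℝ) (Y : ℕ → Ω → ℝ)
    (hX : IsIIDSample X μX) (hY : IsIIDSample Y μY)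
    (hindep : IndepFun (fun ω => fun i => Y i ω) (fun ω => fun i => X i ω) ℙ)
    (βhat : ℕ → Ω → Fin d → ℝ)
    (hmin : ∀ n ω, ∀ β : Fin d → ℝ,
      Dnp (cdfOf μeps) 2 n Y X ω (βhat n ω) ≤ Dnp (cdfOf μeps) 2 n Y X ω β) :
    (∀ ε > (0 : ℝ), ∃ M : ℝ, ∀ n : ℕ, 1 ≤ n →
        ℙ {ω | M < (n : ℝ) * Dnp (cdfOf μeps) 2 n Y X ω (βhat n ω)} ≤ ENNReal.ofReal ε) ∧
    (∀ ε > (0 : ℝ), ∃ M : ℝ, ∀ n : ℕ, 1 ≤ n →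
        ℙ {ω | M < (n : ℝ) * ((n : ℝ)⁻¹ * ∑ j ∈ Finset.range n,
            (cdfOf μY (Y j ω) -
              (n : ℝ)⁻¹ * ∑ i ∈ Finset.range n,
                cdfOf μeps (Y j ω - βhat n ω ⬝ᵥ X i ω)) ^ 2)} ≤ ENNReal.ofReal ε) ∧
    (∀ ε > (0 : ℝ), ∃ M : ℝ, ∀ n : ℕ, 1 ≤ n →
        ℙ {ω | M < (n : ℝ) * Dnp (cdfOf μeps) 2 n Y X ω β₀} ≤ ENNReal.ofReal ε) := by
  classical
  obtain ⟨hYm, hYlaw, hYindep⟩ := hY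
  obtain ⟨hXm, hXlaw, hXindep⟩ := hX
  haveI hPY : IsProbabilityMeasure μY := by
    rw [← hYlaw 0]
    exact Measure.isProbabilityMeasure_map (hYm 0).aemeasurable
  set u : ℕ → ℕ → Ω → ℝ := fun i j ω =>
    (if Y i ω ≤ Y j ω then (1:ℝ) else 0) - cdfOf μY (Y j ω) with hu
  set v : ℕ → ℕ → Ω → ℝ := fun i j ω =>
    cdfOf μY (Y j ω) - cdfOf μeps (Y j ω - β₀ ⬝ᵥ X i ω) with hv
  have hum : ∀ i j, Measurable (u i j) := fun i j =>
    (Measurable.ite (measurableSet_le (hYm i) (hYm j)) measurable_const measurable_const).sub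
      ((measurable_cdfOf μY).comp (hYm j))
  have hvm : ∀ i j, Measurable (v i j) := fun i j =>
    ((measurable_cdfOf μY).comp (hYm j)).sub
      ((measurable_cdfOf μeps).comp ((hYm j).sub ((measurable_dot β₀).comp (hXm i))))
  have hub : ∀ i j ω, |u i j ω| ≤ 1 := by
    intro i j ω
    have h1 := cdfOf_nonneg μY (Y j ω)
    have h2 := cdfOf_le_one μY (Y j ω)
    rw [abs_le]
    constructor <;> simp only [hu] <;> split_ifs <;> simp <;> linarith
  have hvb : ∀ i j ω, |v i j ω| ≤ 1 := by
    intro i j ω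
    have h1 := cdfOf_nonneg μY (Y j ω)
    have h2 := cdfOf_le_one μY (Y j ω)
    have h3 := cdfOf_nonneg μeps (Y j ω - β₀ ⬝ᵥ X i ω)
    have h4 := cdfOf_le_one μeps (Y j ω - β₀ ⬝ᵥ X i ω)
    rw [abs_le]
    constructor <;> simp only [hv] <;> linarith
  set S : ℕ → Ω → ℝ := fun n ω =>
    ∑ j ∈ Finset.range n, ((n:ℝ)⁻¹ * ∑ i ∈ Finset.range n, u i j ω)^2 with hSdef
  set V : ℕ → Ω → ℝ := fun n ω =>
    ∑ j ∈ Finset.range n, ((n:ℝ)⁻¹ * ∑ i ∈ Finset.range n, v i j ω)^2 with hVdef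
  set R : ℕ → Ω → ℝ := fun n ω => S n ω + V n ω with hRdef
  have hSnn : ∀ n ω, 0 ≤ S n ω := fun n ω =>
    Finset.sum_nonneg fun j _ => sq_nonneg _
  have hVnn : ∀ n ω, 0 ≤ V n ω := fun n ω =>
    Finset.sum_nonneg fun j _ => sq_nonneg _
  have hRnn : ∀ n ω, 0 ≤ R n ω := fun n ω => add_nonneg (hSnn n ω) (hVnn n ω)
  have hSint : ∀ n, Integrable (S n) ℙ := fun n =>
    integrable_finset_sum _ fun j _ =>
      integrable_avg_sq n (fun i => u i j) (fun i => hum i j) (fun i ω => hub i j ω)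
  have hVint : ∀ n, Integrable (V n) ℙ := fun n =>
    integrable_finset_sum _ fun j _ =>
      integrable_avg_sq n (fun i => v i j) (fun i => hvm i j) (fun i ω => hvb i j ω)
  have hRint : ∀ n, Integrable (R n) ℙ := fun n => (hSint n).add (hVint n)
  have hES : ∀ n, 1 ≤ n → ∫ ω, S n ω ∂ℙ ≤ 3 := by
    intro n hn
    have hn0 : (0:ℝ) < n := by exact_mod_cast hn
    have hji : ∀ j, ∫ ω, ((n:ℝ)⁻¹ * ∑ i ∈ Finset.range n, u i j ω)^2 ∂ℙ ≤ 3 / n := fun j =>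
      sq_avg_expectation_bound n hn j (fun i => u i j) (fun i => hum i j) (fun i ω => hub i j ω)
        (fun i k hik hij hkj => u_cov_zero μY Y hYm hYlaw hYindep i k j hik hij hkj)
    rw [hSdef]
    rw [integral_finset_sum _ fun j _ =>
      integrable_avg_sq n (fun i => u i j) (fun i => hum i j) (fun i ω => hub i j ω)]
    calc ∑ j ∈ Finset.range n, ∫ ω, ((n:ℝ)⁻¹ * ∑ i ∈ Finset.range n, u i j ω)^2 ∂ℙ
        ≤ ∑ _j ∈ Finset.range n, 3 / (n:ℝ) := Finset.sum_le_sum fun j _ => hji j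
      _ = n * (3 / n) := by rw [Finset.sum_const, Finset.card_range, nsmul_eq_mul]
      _ = 3 := by field_simp
  have hEV : ∀ n, 1 ≤ n → ∫ ω, V n ω ∂ℙ ≤ 3 := by
    intro n hn
    have hn0 : (0:ℝ) < n := by exact_mod_cast hn
    have hji : ∀ j, ∫ ω, ((n:ℝ)⁻¹ * ∑ i ∈ Finset.range n, v i j ω)^2 ∂ℙ ≤ 3 / n := fun j =>
      sq_avg_expectation_bound n hn j (fun i => v i j) (fun i => hvm i j) (fun i ω => hvb i j ω)
        (fun i k hik _ _ => v_cov_zero μX μeps μY β₀ hmodel X Y hXm hXlaw hXindep hYm hYlaw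
          hindep i k j hik)
    rw [hVdef]
    rw [integral_finset_sum _ fun j _ =>
      integrable_avg_sq n (fun i => v i j) (fun i => hvm i j) (fun i ω => hvb i j ω)]
    calc ∑ j ∈ Finset.range n, ∫ ω, ((n:ℝ)⁻¹ * ∑ i ∈ Finset.range n, v i j ω)^2 ∂ℙ
        ≤ ∑ _j ∈ Finset.range n, 3 / (n:ℝ) := Finset.sum_le_sum fun j _ => hji j
      _ = n * (3 / n) := by rw [Finset.sum_const, Finset.card_range, nsmul_eq_mul]
      _ = 3 := by field_simp
  have hER : ∀ n, 1 ≤ n → ∫ ω, R n ω ∂ℙ ≤ 6 := by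
    intro n hn
    rw [hRdef]
    rw [integral_add (hSint n) (hVint n)]
    linarith [hES n hn, hEV n hn]
  -- pointwise decomposition identities
  have hid1 : ∀ n : ℕ, 1 ≤ n → ∀ ω j,
      empCDF n Y ω (Y j ω) - cdfOf μY (Y j ω)
        = (n:ℝ)⁻¹ * ∑ i ∈ Finset.range n, u i j ω := by
    intro n hn ω j
    have hn0 : ((n:ℝ)) ≠ 0 := Nat.cast_ne_zero.mpr (by omega)
    simp only [hu, empCDF]
    rw [Finset.sum_sub_distrib, Finset.sum_const, Finset.card_range, nsmul_eq_mul, mul_sub,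
      ← mul_assoc, inv_mul_cancel₀ hn0, one_mul]
  have hid2 : ∀ n : ℕ, 1 ≤ n → ∀ ω j,
      cdfOf μY (Y j ω) - (n:ℝ)⁻¹ * ∑ i ∈ Finset.range n, cdfOf μeps (Y j ω - β₀ ⬝ᵥ X i ω)
        = (n:ℝ)⁻¹ * ∑ i ∈ Finset.range n, v i j ω := by
    intro n hn ω j
    have hn0 : ((n:ℝ)) ≠ 0 := Nat.cast_ne_zero.mpr (by omega)
    simp only [hv]
    rw [Finset.sum_sub_distrib, Finset.sum_const, Finset.card_range, nsmul_eq_mul, mul_sub,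
      ← mul_assoc, inv_mul_cancel₀ hn0, one_mul]
  have hDnp : ∀ n : ℕ, 1 ≤ n → ∀ ω β,
      (n:ℝ) * Dnp (cdfOf μeps) 2 n Y X ω β
        = ∑ j ∈ Finset.range n, (empCDF n Y ω (Y j ω)
            - (n:ℝ)⁻¹ * ∑ i ∈ Finset.range n, cdfOf μeps (Y j ω - β ⬝ᵥ X i ω))^2 := by
    intro n hn ω β
    have hn0 : ((n:ℝ)) ≠ 0 := Nat.cast_ne_zero.mpr (by omega)
    simp only [Dnp]
    rw [← mul_assoc, mul_inv_cancel₀ hn0, one_mul]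
    exact Finset.sum_congr rfl fun j _ => sq_abs _
  -- pointwise bounds
  have hb0 : ∀ n : ℕ, 1 ≤ n → ∀ ω,
      (n:ℝ) * Dnp (cdfOf μeps) 2 n Y X ω β₀ ≤ 2 * R n ω := by
    intro n hn ω
    rw [hDnp n hn ω β₀]
    have hterm : ∀ j, (empCDF n Y ω (Y j ω)
          - (n:ℝ)⁻¹ * ∑ i ∈ Finset.range n, cdfOf μeps (Y j ω - β₀ ⬝ᵥ X i ω))^2
        ≤ 2 * ((n:ℝ)⁻¹ * ∑ i ∈ Finset.range n, u i j ω)^2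
          + 2 * ((n:ℝ)⁻¹ * ∑ i ∈ Finset.range n, v i j ω)^2 := by
      intro j
      have e1 := hid1 n hn ω j
      have e2 := hid2 n hn ω j
      set A := empCDF n Y ω (Y j ω)
      set B := cdfOf μY (Y j ω)
      set C := (n:ℝ)⁻¹ * ∑ i ∈ Finset.range n, cdfOf μeps (Y j ω - β₀ ⬝ᵥ X i ω)
      rw [← e1, ← e2]
      nlinarith [sq_nonneg ((A - B) - (B - C))]
    calc ∑ j ∈ Finset.range n, (empCDF n Y ω (Y j ω)
            - (n:ℝ)⁻¹ * ∑ i ∈ Finset.range n, cdfOf μeps (Y j ω - β₀ ⬝ᵥ X i ω))^2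
        ≤ ∑ j ∈ Finset.range n, (2 * ((n:ℝ)⁻¹ * ∑ i ∈ Finset.range n, u i j ω)^2
            + 2 * ((n:ℝ)⁻¹ * ∑ i ∈ Finset.range n, v i j ω)^2) :=
          Finset.sum_le_sum fun j _ => hterm j
      _ = 2 * S n ω + 2 * V n ω := by
          rw [Finset.sum_add_distrib, ← Finset.mul_sum, ← Finset.mul_sum]
      _ = 2 * R n ω := by rw [hRdef]; ring
  have hbhat : ∀ n : ℕ, 1 ≤ n → ∀ ω,
      (n:ℝ) * Dnp (cdfOf μeps) 2 n Y X ω (βhat n ω) ≤ 2 * R n ω := by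
    intro n hn ω
    refine le_trans ?_ (hb0 n hn ω)
    exact mul_le_mul_of_nonneg_left (hmin n ω β₀) (Nat.cast_nonneg n)
  have hb2 : ∀ n : ℕ, 1 ≤ n → ∀ ω,
      (n:ℝ) * ((n:ℝ)⁻¹ * ∑ j ∈ Finset.range n,
          (cdfOf μY (Y j ω) - (n:ℝ)⁻¹ * ∑ i ∈ Finset.range n,
            cdfOf μeps (Y j ω - βhat n ω ⬝ᵥ X i ω)) ^ 2) ≤ 6 * R n ω := by
    intro n hn ω
    have hn0 : ((n:ℝ)) ≠ 0 := Nat.cast_ne_zero.mpr (by omega)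
    rw [← mul_assoc, mul_inv_cancel₀ hn0, one_mul]
    have hterm : ∀ j, (cdfOf μY (Y j ω) - (n:ℝ)⁻¹ * ∑ i ∈ Finset.range n,
          cdfOf μeps (Y j ω - βhat n ω ⬝ᵥ X i ω))^2
        ≤ 2 * ((n:ℝ)⁻¹ * ∑ i ∈ Finset.range n, u i j ω)^2
          + 2 * (empCDF n Y ω (Y j ω) - (n:ℝ)⁻¹ * ∑ i ∈ Finset.range n,
              cdfOf μeps (Y j ω - βhat n ω ⬝ᵥ X i ω))^2 := by
      intro j
      have e1 := hid1 n hn ω j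
      set A := empCDF n Y ω (Y j ω)
      set B := cdfOf μY (Y j ω)
      set C := (n:ℝ)⁻¹ * ∑ i ∈ Finset.range n, cdfOf μeps (Y j ω - βhat n ω ⬝ᵥ X i ω)
      rw [← e1]
      nlinarith [sq_nonneg ((B - A) - (A - C))]
    calc ∑ j ∈ Finset.range n, (cdfOf μY (Y j ω) - (n:ℝ)⁻¹ * ∑ i ∈ Finset.range n,
            cdfOf μeps (Y j ω - βhat n ω ⬝ᵥ X i ω))^2
        ≤ ∑ j ∈ Finset.range n, (2 * ((n:ℝ)⁻¹ * ∑ i ∈ Finset.range n, u i j ω)^2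
            + 2 * (empCDF n Y ω (Y j ω) - (n:ℝ)⁻¹ * ∑ i ∈ Finset.range n,
                cdfOf μeps (Y j ω - βhat n ω ⬝ᵥ X i ω))^2) :=
          Finset.sum_le_sum fun j _ => hterm j
      _ = 2 * S n ω + 2 * ((n:ℝ) * Dnp (cdfOf μeps) 2 n Y X ω (βhat n ω)) := by
          rw [Finset.sum_add_distrib, ← Finset.mul_sum, ← Finset.mul_sum,
            hDnp n hn ω (βhat n ω)]
      _ ≤ 2 * S n ω + 2 * (2 * R n ω) := by
          linarith [hbhat n hn ω]
      _ ≤ 6 * R n ω := by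
          have h1 : S n ω ≤ R n ω := by rw [hRdef]; simp only []; linarith [hVnn n ω]
          linarith [hRnn n ω]
  -- final Markov step
  have hfinal : ∀ Z : ℕ → Ω → ℝ, (∀ n : ℕ, 1 ≤ n → ∀ ω, Z n ω ≤ 6 * R n ω) →
      ∀ ε : ℝ, ε > 0 → ∃ M : ℝ, ∀ n : ℕ, 1 ≤ n →
        ℙ {ω | M < Z n ω} ≤ ENNReal.ofReal ε := by
    intro Z hZ ε hε
    refine ⟨36 / ε, fun n hn => ?_⟩
    have hM : (0:ℝ) < 36 / ε / 6 := by positivity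
    have hsub : {ω | 36 / ε < Z n ω} ⊆ {ω | 36 / ε / 6 ≤ R n ω} := by
      intro ω hω
      simp only [Set.mem_setOf_eq] at hω ⊢
      have h1 := hZ n hn ω
      rw [div_le_iff₀ (by norm_num : (0:ℝ) < 6)]
      exact le_of_lt (lt_of_lt_of_le hω (h1.trans_eq (mul_comm 6 (R n ω))))
    calc ℙ {ω | 36 / ε < Z n ω} ≤ ℙ {ω | 36 / ε / 6 ≤ R n ω} := measure_mono hsub
      _ ≤ ENNReal.ofReal (6 / (36 / ε / 6)) :=
          markov_bound (R n) (hRint n) (hRnn n) 6 (hER n hn) hM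
      _ = ENNReal.ofReal ε := by
          congr 1
          field_simp
          ring
  refine ⟨hfinal _ fun n hn ω => ?_, hfinal _ hb2, hfinal _ fun n hn ω => ?_⟩
  · linarith [hbhat n hn ω, hRnn n ω]
  · linarith [hb0 n hn ω, hRnn n ω]
end
end

section
/- Let M > 0 and let f : R → [0, M] be such that there exist real numbers a < b with f non-decreasing on (−∞, a], monotone on (a, b), and non-increasing on [b, ∞). Let X_1,…,X_n be i.i.d. copies of a random vector X in R^d with E‖X‖²_2 < ∞, and let F^X_n denote their empirical distribution. Then sup_{(β,z) ∈ R^d × R} ‖∫ x f(β^T x + z) dF^X_n(x)‖_2 = O_P(1). -/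
open MeasureTheory ProbabilityTheory Filter Matrix
open scoped ENNReal NNReal Topology

noncomputable section

lemma vnorm_eq {d : ℕ} (v : Fin d → ℝ) :
    vnorm v = ‖(WithLp.equiv 2 (Fin d → ℝ)).symm v‖ := by
  rw [EuclideanSpace.norm_eq]
  simp [vnorm, Real.norm_eq_abs, sq_abs]

lemma vnorm_nonneg {d : ℕ} (v : Fin d → ℝ) : 0 ≤ vnorm v := Real.sqrt_nonneg _

lemma vnorm_const_mul {d : ℕ} (c : ℝ) (hc : 0 ≤ c) (v : Fin d → ℝ) :
    vnorm (fun i => c * v i) = c * vnorm v := by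
  have : (fun i => c * v i) = c • v := rfl
  rw [this, vnorm_eq, vnorm_eq]
  have : (WithLp.equiv 2 (Fin d → ℝ)).symm (c • v)
      = c • (WithLp.equiv 2 (Fin d → ℝ)).symm v := rfl
  rw [this, norm_smul, Real.norm_eq_abs, abs_of_nonneg hc]

lemma vnorm_sum_le {d n : ℕ} (w : ℕ → Fin d → ℝ) (c : ℕ → ℝ) (M : ℝ)
    (hc0 : ∀ k, 0 ≤ c k) (hcM : ∀ k, c k ≤ M) :
    vnorm (fun i => ∑ k ∈ Finset.range n, w k i * c k)
      ≤ ∑ k ∈ Finset.range n, M * vnorm (w k) := by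
  have h1 : (fun i => ∑ k ∈ Finset.range n, w k i * c k)
      = ∑ k ∈ Finset.range n, (c k • w k) := by
    funext i
    simp [Finset.sum_apply, mul_comm]
  rw [h1, vnorm_eq]
  have h2 : (WithLp.equiv 2 (Fin d → ℝ)).symm (∑ k ∈ Finset.range n, c k • w k)
      = ∑ k ∈ Finset.range n, c k • (WithLp.equiv 2 (Fin d → ℝ)).symm (w k) := by
    ext i
    simp [Finset.sum_apply]
  rw [h2]
  refine (norm_sum_le _ _).trans (Finset.sum_le_sum fun k _ => ?_)
  rw [norm_smul, Real.norm_eq_abs, abs_of_nonneg (hc0 k), vnorm_eq]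
  exact mul_le_mul_of_nonneg_right (hcM k) (norm_nonneg _)

lemma vnorm_measurable {d : ℕ} : Measurable (vnorm (d := d)) := by
  unfold vnorm
  exact (Finset.measurable_sum _ fun i _ =>
    (measurable_pi_apply i).pow_const 2).sqrt

lemma vnorm_le_one_add {d : ℕ} (v : Fin d → ℝ) : vnorm v ≤ 1 + ∑ i, v i ^ 2 := by
  have hs : (0 : ℝ) ≤ ∑ i, v i ^ 2 := Finset.sum_nonneg fun i _ => sq_nonneg _
  have h1 := Real.sq_sqrt hs
  have h2 := sq_nonneg (Real.sqrt (∑ i, v i ^ 2) - 1)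
  unfold vnorm
  nlinarith [Real.sqrt_nonneg (∑ i, v i ^ 2)]

/-- **Uniform stochastic boundedness of empirical vector integrals of a
piecewise monotone bounded function.**  If `0 ≤ f ≤ M` is nondecreasing on `(-∞, a]`,
monotone on `(a, b)` and nonincreasing on `[b, ∞)`, and `E‖X‖² < ∞`, then
`sup_{β,z} ‖∫ x f(βᵀx + z) dFₙˣ(x)‖₂ = O_P(1)`. -/
theorem piecewise_monotone_uniform_bound
    {Ω : Type*} [MeasureSpace Ω] [IsProbabilityMeasure (ℙ : Measure Ω)]
    {d : ℕ} (μX : Measure (Fin d → ℝ)) [IsProbabilityMeasure μX]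
    (f : ℝ → ℝ) (M : ℝ) (hM : 0 < M)
    (hf0 : ∀ t, 0 ≤ f t) (hfM : ∀ t, f t ≤ M)
    (a b : ℝ) (hab : a < b)
    (h1 : MonotoneOn f (Set.Iic a))
    (h2 : MonotoneOn f (Set.Ioo a b) ∨ AntitoneOn f (Set.Ioo a b))
    (h3 : AntitoneOn f (Set.Ici b))
    (X : ℕ → Ω → Fin d → ℝ) (hX : IsIIDSample X μX)
    (hX2 : Integrable (fun x : Fin d → ℝ => ∑ i, x i ^ 2) μX) :
    ∀ ε > (0 : ℝ), ∃ K : ℝ, ∀ n : ℕ, 1 ≤ n →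
      ℙ {ω | ∃ β : Fin d → ℝ, ∃ z : ℝ,
          K < vnorm (fun i => (n : ℝ)⁻¹ * ∑ k ∈ Finset.range n,
            X k ω i * f (β ⬝ᵥ X k ω + z))} ≤ ENNReal.ofReal ε := by
  intro ε hε
  obtain ⟨hXm, hXd, -⟩ := hX
  -- finiteness of the first moment of the norm
  set C : ℝ≥0∞ := ∫⁻ x, ENNReal.ofReal (vnorm x) ∂μX with hCdef
  have hC_fin : C ≠ ⊤ := by
    have hle : C ≤ ∫⁻ x, (1 + ENNReal.ofReal (∑ i, x i ^ 2)) ∂μX := by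
      refine lintegral_mono fun x => ?_
      calc ENNReal.ofReal (vnorm x) ≤ ENNReal.ofReal (1 + ∑ i, x i ^ 2) :=
            ENNReal.ofReal_le_ofReal (vnorm_le_one_add x)
        _ = 1 + ENNReal.ofReal (∑ i, x i ^ 2) := by
            rw [ENNReal.ofReal_add zero_le_one (Finset.sum_nonneg fun i _ => sq_nonneg _),
              ENNReal.ofReal_one]
    have hfin : ∫⁻ x, (1 + ENNReal.ofReal (∑ i, x i ^ 2)) ∂μX < ⊤ := by
      rw [lintegral_add_left measurable_const]
      simp only [lintegral_const, one_mul]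
      have h2 : ∫⁻ x, ENNReal.ofReal (∑ i, x i ^ 2) ∂μX < ⊤ := by
        refine lt_of_le_of_lt (lintegral_mono fun x => ?_) hX2.2
        rw [Real.enorm_eq_ofReal (Finset.sum_nonneg fun i _ => sq_nonneg _)]
      refine ENNReal.add_lt_top.mpr ⟨?_, h2⟩
      simp [measure_lt_top]
    exact (lt_of_le_of_lt hle hfin).ne
  set T : ℝ≥0∞ := ENNReal.ofReal M * C with hTdef
  have hT_fin : T ≠ ⊤ := ENNReal.mul_ne_top ENNReal.ofReal_ne_top hC_fin
  refine ⟨T.toReal / ε + 1, fun n hn => ?_⟩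
  set K : ℝ := T.toReal / ε + 1 with hKdef
  have hK : 0 < K := by positivity
  -- the dominating random variable
  set g : Ω → ℝ≥0∞ := fun ω =>
    ENNReal.ofReal ((n : ℝ)⁻¹ * ∑ k ∈ Finset.range n, M * vnorm (X k ω)) with hgdef
  have hsub : {ω | ∃ β : Fin d → ℝ, ∃ z : ℝ,
      K < vnorm (fun i => (n : ℝ)⁻¹ * ∑ k ∈ Finset.range n,
        X k ω i * f (β ⬝ᵥ X k ω + z))} ⊆ {ω | ENNReal.ofReal K ≤ g ω} := by
    intro ω hω
    obtain ⟨β, z, hβz⟩ := hω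
    have hbound : vnorm (fun i => (n : ℝ)⁻¹ * ∑ k ∈ Finset.range n,
        X k ω i * f (β ⬝ᵥ X k ω + z))
        ≤ (n : ℝ)⁻¹ * ∑ k ∈ Finset.range n, M * vnorm (X k ω) := by
      rw [vnorm_const_mul _ (by positivity)]
      exact mul_le_mul_of_nonneg_left
        (vnorm_sum_le (fun k => X k ω) (fun k => f (β ⬝ᵥ X k ω + z)) M
          (fun k => hf0 _) (fun k => hfM _)) (by positivity)
    exact ENNReal.ofReal_le_ofReal (le_of_lt (lt_of_lt_of_le hβz hbound))
  have hgi : ∫⁻ ω, g ω ∂(ℙ : Measure Ω) = T := by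
    have heach : ∀ k, ∫⁻ ω, ENNReal.ofReal (vnorm (X k ω)) ∂(ℙ : Measure Ω) = C := by
      intro k
      rw [hCdef, ← hXd k, lintegral_map (vnorm_measurable.ennreal_ofReal) (hXm k)]
    have hrw : ∀ ω, g ω = ENNReal.ofReal ((n : ℝ)⁻¹) *
        ∑ k ∈ Finset.range n, ENNReal.ofReal M * ENNReal.ofReal (vnorm (X k ω)) := by
      intro ω
      show ENNReal.ofReal ((n : ℝ)⁻¹ * ∑ k ∈ Finset.range n, M * vnorm (X k ω)) = _
      rw [ENNReal.ofReal_mul (by positivity),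
        ENNReal.ofReal_sum_of_nonneg (fun k _ => mul_nonneg hM.le (vnorm_nonneg _))]
      congr 1
      refine Finset.sum_congr rfl fun k _ => ?_
      rw [ENNReal.ofReal_mul hM.le]
    have hm : ∀ k, Measurable fun ω : Ω => ENNReal.ofReal (vnorm (X k ω)) :=
      fun k => Measurable.ennreal_ofReal (by exact vnorm_measurable.comp (hXm k))
    simp only [hrw]
    rw [lintegral_const_mul _ (Finset.measurable_sum _ fun k _ =>
        (hm k).const_mul _)]
    rw [lintegral_finset_sum _ (fun k _ => (hm k).const_mul _)]
    have : ∀ k ∈ Finset.range n, ∫⁻ ω, ENNReal.ofReal M *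
        ENNReal.ofReal (vnorm (X k ω)) ∂(ℙ : Measure Ω) = ENNReal.ofReal M * C := by
      intro k _
      rw [lintegral_const_mul _ (hm k)]
      rw [heach k]
    rw [Finset.sum_congr rfl this, Finset.sum_const, Finset.card_range, nsmul_eq_mul]
    have hn0 : (n : ℝ≥0∞) ≠ 0 := by
      exact_mod_cast Nat.one_le_iff_ne_zero.mp hn
    have hinv : ENNReal.ofReal ((n : ℝ)⁻¹) = (n : ℝ≥0∞)⁻¹ := by
      rw [ENNReal.ofReal_inv_of_pos (by exact_mod_cast hn), ENNReal.ofReal_natCast]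
    rw [hinv, ← mul_assoc, ENNReal.inv_mul_cancel hn0 (ENNReal.natCast_ne_top n), one_mul]
  have hgm : AEMeasurable g (ℙ : Measure Ω) := by
    refine Measurable.aemeasurable ?_
    refine Measurable.ennreal_ofReal ?_
    exact measurable_const.mul (Finset.measurable_sum _ fun k _ =>
      measurable_const.mul (vnorm_measurable.comp (hXm k)))
  calc ℙ {ω | ∃ β : Fin d → ℝ, ∃ z : ℝ,
        K < vnorm (fun i => (n : ℝ)⁻¹ * ∑ k ∈ Finset.range n,
          X k ω i * f (β ⬝ᵥ X k ω + z))}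
      ≤ ℙ {ω | ENNReal.ofReal K ≤ g ω} := measure_mono hsub
    _ ≤ (∫⁻ ω, g ω ∂(ℙ : Measure Ω)) / ENNReal.ofReal K :=
        meas_ge_le_lintegral_div hgm (by simp [hK]) ENNReal.ofReal_ne_top
    _ = T / ENNReal.ofReal K := by rw [hgi]
    _ ≤ ENNReal.ofReal ε := by
        refine ENNReal.div_le_of_le_mul ?_
        rw [← ENNReal.ofReal_mul hε.le]
        have hεK : ε * K = T.toReal + ε := by
          rw [hKdef]; field_simp
        rw [hεK]
        calc T = ENNReal.ofReal T.toReal := (ENNReal.ofReal_toReal hT_fin).symm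
          _ ≤ ENNReal.ofReal (T.toReal + ε) :=
              ENNReal.ofReal_le_ofReal (by linarith)
end
end

section
/- Assume F^ε admits a density f^ε ∈ C² with f^ε ≤ M and |(f^ε)'| ≤ M for some M > 0, E‖X‖²_2 < ∞, and that the matrix U = ∫ (∫ x f^ε(y − β_0^T x) dF^X(x)) (∫ x^T f^ε(y − β_0^T x) dF^X(x)) dF^Y(y) is positive definite. Then there exist a neighborhood of β_0 and a constant C > 0 such that D_{2,F^Y}(β) ≥ C ‖β − β_0‖²_2 for all β in that neighborhood. -/
open MeasureTheory ProbabilityTheory Filter Matrix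
open scoped ENNReal NNReal Topology

noncomputable section

lemma vnorm_sq {d : ℕ} (v : Fin d → ℝ) : vnorm v ^ 2 = ∑ i, v i ^ 2 :=
  Real.sq_sqrt (Finset.sum_nonneg fun i _ => sq_nonneg _)

lemma abs_le_vnorm {d : ℕ} (v : Fin d → ℝ) (i : Fin d) : |v i| ≤ vnorm v := by
  rw [← Real.sqrt_sq_eq_abs]
  exact Real.sqrt_le_sqrt (Finset.single_le_sum (fun j _ => sq_nonneg (v j)) (Finset.mem_univ i))

lemma vnorm_pos {d : ℕ} {v : Fin d → ℝ} (hv : v ≠ 0) : 0 < vnorm v := by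
  obtain ⟨i, hi⟩ := Function.ne_iff.mp hv
  exact lt_of_lt_of_le (lt_of_lt_of_le (abs_pos.mpr hi) (abs_le_vnorm v i)) le_rfl

lemma vnorm_smul {d : ℕ} (a : ℝ) (v : Fin d → ℝ) : vnorm (a • v) = |a| * vnorm v := by
  unfold vnorm
  rw [show ∑ i, (a • v) i ^ 2 = a ^ 2 * ∑ i, v i ^ 2 by
      rw [Finset.mul_sum]; exact Finset.sum_congr rfl fun i _ => by simp [mul_pow],
    Real.sqrt_mul (sq_nonneg a), Real.sqrt_sq_eq_abs]

lemma sq_dot_le {d : ℕ} (h x : Fin d → ℝ) :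
    (h ⬝ᵥ x) ^ 2 ≤ vnorm h ^ 2 * (1 + ∑ i, x i ^ 2) := by
  have hcs := Finset.sum_mul_sq_le_sq_mul_sq Finset.univ h x
  have h1 : (h ⬝ᵥ x) ^ 2 ≤ (∑ i, h i ^ 2) * ∑ i, x i ^ 2 := hcs
  have h2 : (0:ℝ) ≤ ∑ i, h i ^ 2 := Finset.sum_nonneg fun i _ => sq_nonneg _
  rw [vnorm_sq]
  nlinarith [Finset.sum_nonneg (fun i (_ : i ∈ Finset.univ) => sq_nonneg (x i))]

lemma abs_dot_le {d : ℕ} (h x : Fin d → ℝ) :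
    |h ⬝ᵥ x| ≤ vnorm h * (1 + ∑ i, x i ^ 2) := by
  have hW : (0:ℝ) ≤ ∑ i, x i ^ 2 := Finset.sum_nonneg fun i _ => sq_nonneg _
  have hsq := sq_dot_le h x
  have hn := vnorm_nonneg h
  have hb : 0 ≤ vnorm h * (1 + ∑ i, x i ^ 2) := mul_nonneg hn (by linarith)
  rw [← Real.sqrt_sq (abs_nonneg (h ⬝ᵥ x)), ← Real.sqrt_sq hb]
  exact Real.sqrt_le_sqrt (by rw [sq_abs]; nlinarith)

lemma posdef_lower {d : ℕ} (U : Matrix (Fin d) (Fin d) ℝ) (hU : U.PosDef) :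
    ∃ c : ℝ, 0 < c ∧ ∀ h : Fin d → ℝ, c * vnorm h ^ 2 ≤ h ⬝ᵥ U *ᵥ h := by
  rcases Nat.eq_zero_or_pos d with hd | hd
  · subst hd
    refine ⟨1, one_pos, fun h => ?_⟩
    simp [vnorm, dotProduct]
  · haveI : NeZero d := ⟨hd.ne'⟩
    set q : (Fin d → ℝ) → ℝ := fun h => h ⬝ᵥ U *ᵥ h with hq
    have hqcont : Continuous q := by
      have : q = fun h : Fin d → ℝ => ∑ i, h i * ∑ j, U i j * h j := by
        funext h; simp [q, dotProduct, Matrix.mulVec]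
      rw [this]
      exact continuous_finset_sum _ fun i _ => (continuous_apply i).mul
        (continuous_finset_sum _ fun j _ => continuous_const.mul (continuous_apply j))
    set K : Set (Fin d → ℝ) := {h | ∑ i, h i ^ 2 = 1} with hK
    have hKclosed : IsClosed K := isClosed_eq
      (continuous_finset_sum _ fun i _ => (continuous_apply i).pow 2) continuous_const
    have hKsub : K ⊆ Metric.closedBall 0 1 := by
      intro h hh
      rw [Metric.mem_closedBall, dist_zero_right]
      refine (pi_norm_le_iff_of_nonneg zero_le_one).mpr fun i => ?_
      rw [Real.norm_eq_abs, ← Real.sqrt_one, ← Real.sqrt_sq_eq_abs]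
      exact Real.sqrt_le_sqrt (by
        calc h i ^ 2 ≤ ∑ j, h j ^ 2 :=
          Finset.single_le_sum (fun j _ => sq_nonneg (h j)) (Finset.mem_univ i)
        _ = 1 := hh)
    have hKcomp : IsCompact K :=
      (isCompact_closedBall (0 : Fin d → ℝ) 1).of_isClosed_subset hKclosed hKsub
    have hKne : K.Nonempty := by
      refine ⟨Pi.single 0 1, ?_⟩
      simp [hK, Pi.single_apply]
    obtain ⟨u₀, hu₀K, hu₀min⟩ := hKcomp.exists_isMinOn hKne hqcont.continuousOn
    have hu₀ne : u₀ ≠ 0 := by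
      intro h0
      rw [h0] at hu₀K
      simp [hK] at hu₀K
    refine ⟨q u₀, (by simpa [q] using hU.dotProduct_mulVec_pos hu₀ne), fun h => ?_⟩
    rcases eq_or_ne h 0 with rfl | hne
    · simp [q, vnorm]
    · set n := vnorm h with hn
      have hnpos : 0 < n := vnorm_pos hne
      set u : Fin d → ℝ := n⁻¹ • h with hu
      have huK : u ∈ K := by
        have : ∑ i, u i ^ 2 = n⁻¹ ^ 2 * ∑ i, h i ^ 2 := by
          rw [Finset.mul_sum]; congr 1; funext i; simp [hu]; ring
        rw [hK]; simp only [Set.mem_setOf_eq, this, ← vnorm_sq h]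
        field_simp
        rw [hn]
      have hqu : q u₀ ≤ q u := hu₀min huK
      have hhu : h = n • u := by
        rw [hu, smul_smul, mul_inv_cancel₀ hnpos.ne', one_smul]
      have hqh : q h = n ^ 2 * q u := by
        rw [hhu]; simp [q, smul_dotProduct, dotProduct_smul, Matrix.mulVec_smul]
        ring
      have : q u₀ * n ^ 2 ≤ q h := by rw [hqh]; nlinarith
      exact this

section CDF
variable (μeps : Measure ℝ) [IsProbabilityMeasure μeps] (feps : ℝ → ℝ)
variable (hfnonneg : ∀ t, 0 ≤ feps t) (hfcont : Continuous feps)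
variable (hdensity : μeps = volume.withDensity fun t => ENNReal.ofReal (feps t))
include hfnonneg hfcont hdensity

lemma cdfOf_eq_integral (y : ℝ) : cdfOf μeps y = ∫ t in Set.Iic y, feps t := by
  unfold cdfOf
  rw [hdensity, withDensity_apply _ measurableSet_Iic]
  rw [MeasureTheory.integral_eq_lintegral_of_nonneg_ae
    (Filter.Eventually.of_forall fun t => hfnonneg t)
    (hfcont.aestronglyMeasurable.restrict)]

lemma feps_integrable : Integrable feps := by
  constructor
  · exact hfcont.aestronglyMeasurable
  · rw [hasFiniteIntegral_iff_ofReal (Filter.Eventually.of_forall hfnonneg)]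
    have : ∫⁻ t, ENNReal.ofReal (feps t) = μeps Set.univ := by
      rw [hdensity]; simp [withDensity_apply _ MeasurableSet.univ]
    rw [this]
    exact measure_lt_top _ _

lemma cdfOf_sub_eq (a b : ℝ) :
    cdfOf μeps b - cdfOf μeps a = ∫ t in a..b, feps t := by
  rw [cdfOf_eq_integral μeps feps hfnonneg hfcont hdensity,
    cdfOf_eq_integral μeps feps hfnonneg hfcont hdensity]
  exact intervalIntegral.integral_Iic_sub_Iic
    ((feps_integrable μeps feps hfnonneg hfcont hdensity).integrableOn)
    ((feps_integrable μeps feps hfnonneg hfcont hdensity).integrableOn)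

lemma cdfOf_lipschitz (M : ℝ) (hM : 0 < M) (hfbound : ∀ t, feps t ≤ M) (a b : ℝ) :
    |cdfOf μeps b - cdfOf μeps a| ≤ M * |b - a| := by
  rw [cdfOf_sub_eq μeps feps hfnonneg hfcont hdensity]
  have := intervalIntegral.norm_integral_le_of_norm_le_const
    (a := a) (b := b) (C := M) (f := feps)
    (fun t _ => by rw [Real.norm_eq_abs, abs_of_nonneg (hfnonneg t)]; exact hfbound t)
  rwa [Real.norm_eq_abs] at this

lemma cdfOf_taylor (M : ℝ) (hM : 0 < M)
    (hlip : ∀ s t : ℝ, |feps s - feps t| ≤ M * |s - t|) (a b : ℝ) :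
    |cdfOf μeps b - cdfOf μeps a - feps a * (b - a)| ≤ M * (b - a) ^ 2 := by
  have h1 : feps a * (b - a) = ∫ t in a..b, feps a := by
    rw [intervalIntegral.integral_const, smul_eq_mul]; ring
  rw [cdfOf_sub_eq μeps feps hfnonneg hfcont hdensity, h1,
    ← intervalIntegral.integral_sub
      ((feps_integrable μeps feps hfnonneg hfcont hdensity).intervalIntegrable)
      intervalIntegrable_const]
  have hb : ∀ t ∈ Set.uIoc a b, ‖feps t - feps a‖ ≤ M * |b - a| := by
    intro t ht
    rw [Real.norm_eq_abs]
    refine le_trans (hlip t a) (mul_le_mul_of_nonneg_left ?_ hM.le)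
    rcases le_total a b with hab | hab
    · rw [Set.uIoc_of_le hab] at ht
      rw [abs_of_nonneg (by linarith [ht.1.le]), abs_of_nonneg (by linarith)]
      linarith [ht.2]
    · rw [Set.uIoc_of_ge hab] at ht
      rw [abs_of_nonpos (by linarith [ht.2]), abs_of_nonpos (by linarith)]
      linarith [ht.1]
  have := intervalIntegral.norm_integral_le_of_norm_le_const hb
  rw [Real.norm_eq_abs] at this
  calc |∫ t in a..b, (feps t - feps a)| ≤ M * |b - a| * |b - a| := this
    _ = M * (b - a) ^ 2 := by rw [mul_assoc, ← abs_mul, ← sq, abs_of_nonneg (sq_nonneg _)]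

omit hfnonneg hfcont hdensity in
lemma feps_lip (M : ℝ) (hC2 : ContDiff ℝ 2 feps) (hf' : ∀ t, |deriv feps t| ≤ M) :
    ∀ s t : ℝ, |feps s - feps t| ≤ M * |s - t| := by
  have hM0 : 0 ≤ M := le_trans (abs_nonneg _) (hf' 0)
  have hdiff : Differentiable ℝ feps := hC2.differentiable (by norm_num)
  have hlip : LipschitzWith (Real.toNNReal M) feps := by
    apply lipschitzWith_of_nnnorm_deriv_le hdiff
    intro x
    rw [← NNReal.coe_le_coe, coe_nnnorm, Real.coe_toNNReal _ hM0, Real.norm_eq_abs]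
    exact hf' x
  intro s t
  have := hlip.dist_le_mul s t
  rwa [Real.dist_eq, Real.dist_eq, Real.coe_toNNReal _ hM0] at this

end CDF

lemma dot_continuous {d : ℕ} (β : Fin d → ℝ) : Continuous fun x : Fin d → ℝ => β ⬝ᵥ x :=
  continuous_finset_sum _ fun i _ => continuous_const.mul (continuous_apply i)

lemma cdfY_eq {d : ℕ} (μX : Measure (Fin d → ℝ)) (μeps μY : Measure ℝ)
    [IsProbabilityMeasure μX] [IsProbabilityMeasure μeps]
    (β₀ : Fin d → ℝ) (hmodel : UnlinkedModel μX μeps β₀ μY) (y : ℝ) :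
    cdfOf μY y = ∫ x, cdfOf μeps (y - β₀ ⬝ᵥ x) ∂μX := by
  have hm : μY = Measure.map (fun q : (Fin d → ℝ) × ℝ => β₀ ⬝ᵥ q.1 + q.2) (μX.prod μeps) :=
    hmodel
  have hfm : Measurable fun q : (Fin d → ℝ) × ℝ => β₀ ⬝ᵥ q.1 + q.2 :=
    (((dot_continuous β₀).comp continuous_fst).add continuous_snd).measurable
  have hpre : (fun q : (Fin d → ℝ) × ℝ => β₀ ⬝ᵥ q.1 + q.2) ⁻¹' Set.Iic y
      = {q : (Fin d → ℝ) × ℝ | β₀ ⬝ᵥ q.1 + q.2 ≤ y} := rfl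
  have hY : μY (Set.Iic y) = ∫⁻ x, μeps (Set.Iic (y - β₀ ⬝ᵥ x)) ∂μX := by
    rw [hm, Measure.map_apply hfm measurableSet_Iic,
      Measure.prod_apply (hfm measurableSet_Iic)]
    congr 1
    funext x
    congr 1
    ext t
    simp only [Set.mem_preimage, Set.mem_Iic]
    constructor <;> intro <;> linarith
  have hmono : Measurable fun t : ℝ => μeps (Set.Iic t) :=
    Monotone.measurable fun a b hab => measure_mono (Set.Iic_subset_Iic.mpr hab)
  have haem : AEMeasurable (fun x => μeps (Set.Iic (y - β₀ ⬝ᵥ x))) μX :=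
    (hmono.comp ((measurable_const.sub (dot_continuous β₀).measurable))).aemeasurable
  have hfin : ∀ᵐ x ∂μX, μeps (Set.Iic (y - β₀ ⬝ᵥ x)) < ⊤ :=
    Filter.Eventually.of_forall fun x => measure_lt_top _ _
  unfold cdfOf
  rw [hY, ← integral_toReal haem hfin]

/-- **Local quadratic lower bound for the population criterion.**  If the
noise density `f^ε` is `C²` with `f^ε ≤ M` and `|(f^ε)'| ≤ M`, `E‖X‖² < ∞`, and the matrix
`U` is positive definite, then there is a neighborhood of `β₀` and `C > 0` such that
`D_{2,F^Y}(β) ≥ C ‖β - β₀‖²` on that neighborhood. -/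
theorem population_criterion_quadratic_lower_bound
    {d : ℕ} (μX : Measure (Fin d → ℝ)) (μeps μY : Measure ℝ)
    [IsProbabilityMeasure μX] [IsProbabilityMeasure μeps]
    (β₀ : Fin d → ℝ) (hmodel : UnlinkedModel μX μeps β₀ μY)
    (feps : ℝ → ℝ) (hfnonneg : ∀ t, 0 ≤ feps t)
    (hdensity : μeps = volume.withDensity fun t => ENNReal.ofReal (feps t))
    (hC2 : ContDiff ℝ 2 feps)
    (M : ℝ) (hM : 0 < M) (hfbound : ∀ t, feps t ≤ M)
    (hf'bound : ∀ t, |deriv feps t| ≤ M)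
    (hX2 : Integrable (fun x : Fin d → ℝ => ∑ i, x i ^ 2) μX)
    (hU : Matrix.PosDef (Matrix.of fun i j : Fin d =>
      ∫ y, (∫ x, x i * feps (y - β₀ ⬝ᵥ x) ∂μX) *
        (∫ x, x j * feps (y - β₀ ⬝ᵥ x) ∂μX) ∂μY)) :
    ∃ C : ℝ, 0 < C ∧ ∃ δ : ℝ, 0 < δ ∧ ∀ β : Fin d → ℝ, vnorm (β - β₀) < δ →
      C * vnorm (β - β₀) ^ 2 ≤ Dpop (cdfOf μeps) μX μY β := by
  -- basic facts about feps and Feps := cdfOf μeps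
  have hfcont : Continuous feps := hC2.continuous
  have hlipf : ∀ s t : ℝ, |feps s - feps t| ≤ M * |s - t| :=
    feps_lip feps M hC2 hf'bound
  have hT := cdfOf_taylor μeps feps hfnonneg hfcont hdensity M hM hlipf
  have hFlip := cdfOf_lipschitz μeps feps hfnonneg hfcont hdensity M hM hfbound
  have hFcont : Continuous (cdfOf μeps) := by
    refine (LipschitzWith.of_dist_le_mul (K := M.toNNReal) fun a b => ?_).continuous
    rw [Real.dist_eq, Real.dist_eq, Real.coe_toNNReal _ hM.le]
    exact hFlip b a
  -- μY is a probability measure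
  have hfm : Measurable fun q : (Fin d → ℝ) × ℝ => β₀ ⬝ᵥ q.1 + q.2 :=
    (((dot_continuous β₀).comp continuous_fst).add continuous_snd).measurable
  have hm : μY = Measure.map (fun q : (Fin d → ℝ) × ℝ => β₀ ⬝ᵥ q.1 + q.2) (μX.prod μeps) :=
    hmodel
  haveI : IsProbabilityMeasure μY := by
    rw [hm]; exact Measure.isProbabilityMeasure_map hfm.aemeasurable
  have hcdfY := cdfY_eq μX μeps μY β₀ hmodel
  -- weight function
  set W : (Fin d → ℝ) → ℝ := fun x => 1 + ∑ i, x i ^ 2 with hWdef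
  have hW1 : ∀ x, 1 ≤ W x := fun x => by
    simp only [hWdef, le_add_iff_nonneg_right]
    exact Finset.sum_nonneg fun i _ => sq_nonneg _
  have hW0 : ∀ x, 0 ≤ W x := fun x => le_trans zero_le_one (hW1 x)
  have hWint : Integrable W μX := (integrable_const 1).add hX2
  set S : ℝ := ∫ x, W x ∂μX with hSdef
  have hS1 : 1 ≤ S := by
    calc (1:ℝ) = ∫ _x, (1:ℝ) ∂μX := by simp
    _ ≤ S := integral_mono (integrable_const 1) hWint hW1
  have hS0 : 0 < S := lt_of_lt_of_le one_pos hS1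
  have hxiW : ∀ (x : Fin d → ℝ) (i : Fin d), |x i| ≤ W x := by
    intro x i
    have h1 : x i ^ 2 ≤ ∑ j, x j ^ 2 :=
      Finset.single_le_sum (fun j _ => sq_nonneg (x j)) (Finset.mem_univ i)
    simp only [hWdef]
    nlinarith [sq_nonneg (|x i| - 1), sq_abs (x i)]
  -- the vector field v
  set v : Fin d → ℝ → ℝ := fun i y => ∫ x, x i * feps (y - β₀ ⬝ᵥ x) ∂μX with hvdef
  have hIφ : ∀ (β : Fin d → ℝ) (y : ℝ),
      Integrable (fun x => cdfOf μeps (y - β ⬝ᵥ x)) μX := by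
    intro β y
    refine Integrable.mono' (integrable_const 1)
      ((hFcont.comp (continuous_const.sub (dot_continuous β))).aestronglyMeasurable) ?_
    refine Filter.Eventually.of_forall fun x => ?_
    rw [Real.norm_eq_abs, abs_of_nonneg (cdfOf_nonneg μeps _)]
    exact cdfOf_le_one μeps _
  have hIv : ∀ (i : Fin d) (y : ℝ),
      Integrable (fun x => x i * feps (y - β₀ ⬝ᵥ x)) μX := by
    intro i y
    refine Integrable.mono' (hWint.const_mul M)
      (((continuous_apply i).mul
        (hfcont.comp (continuous_const.sub (dot_continuous β₀)))).aestronglyMeasurable) ?_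
    refine Filter.Eventually.of_forall fun x => ?_
    rw [Real.norm_eq_abs, abs_mul, abs_of_nonneg (hfnonneg _)]
    calc |x i| * feps (y - β₀ ⬝ᵥ x) ≤ W x * M :=
      mul_le_mul (hxiW x i) (hfbound _) (hfnonneg _) (hW0 x)
    _ = M * W x := mul_comm _ _
  have hvb : ∀ (i : Fin d) (y : ℝ), |v i y| ≤ M * S := by
    intro i y
    simp only [hvdef]
    rw [← Real.norm_eq_abs]
    calc ‖∫ x, x i * feps (y - β₀ ⬝ᵥ x) ∂μX‖ ≤ ∫ x, M * W x ∂μX := by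
          refine norm_integral_le_of_norm_le (hWint.const_mul M)
            (Filter.Eventually.of_forall fun x => ?_)
          rw [Real.norm_eq_abs, abs_mul, abs_of_nonneg (hfnonneg _)]
          calc |x i| * feps (y - β₀ ⬝ᵥ x) ≤ W x * M :=
            mul_le_mul (hxiW x i) (hfbound _) (hfnonneg _) (hW0 x)
          _ = M * W x := mul_comm _ _
    _ = M * S := by rw [integral_const_mul]
  have hvmeas : ∀ i : Fin d, StronglyMeasurable (v i) := by
    intro i
    have : Continuous fun p : ℝ × (Fin d → ℝ) => p.2 i * feps (p.1 - β₀ ⬝ᵥ p.2) :=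
      ((continuous_apply i).comp continuous_snd).mul
        (hfcont.comp (continuous_fst.sub ((dot_continuous β₀).comp continuous_snd)))
    exact this.stronglyMeasurable.integral_prod_right'
  -- measurability of cdfOf μY
  have hcdfYmeas : Measurable (cdfOf μY) := by
    apply Monotone.measurable
    intro a b hab
    exact ENNReal.toReal_mono (measure_ne_top _ _)
      (measure_mono (Set.Iic_subset_Iic.mpr hab))
  -- quadratic lower bound constant
  obtain ⟨c, hc, hcq⟩ := posdef_lower _ hU
  set K : ℝ := 2 * d * M ^ 2 * S ^ 2 + 1 with hKdef
  have hK0 : 0 < K := by positivity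
  refine ⟨c / 2, by positivity, c / (2 * K), by positivity, ?_⟩
  intro β hβ
  set h : Fin d → ℝ := β - β₀ with hhdef
  set n : ℝ := vnorm h with hndef
  have hn0 : 0 ≤ n := vnorm_nonneg h
  have hdot_split : ∀ x : Fin d → ℝ, h ⬝ᵥ x = β ⬝ᵥ x - β₀ ⬝ᵥ x := fun x => by
    simp [hhdef, sub_dotProduct]
  -- integrability of dot * feps
  have hIdot : ∀ y : ℝ, Integrable (fun x => (h ⬝ᵥ x) * feps (y - β₀ ⬝ᵥ x)) μX := by
    intro y
    refine Integrable.mono' (hWint.const_mul (n * M))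
      (((dot_continuous h).mul
        (hfcont.comp (continuous_const.sub (dot_continuous β₀)))).aestronglyMeasurable) ?_
    refine Filter.Eventually.of_forall fun x => ?_
    rw [Real.norm_eq_abs, abs_mul, abs_of_nonneg (hfnonneg _)]
    calc |h ⬝ᵥ x| * feps (y - β₀ ⬝ᵥ x) ≤ (n * W x) * M := by
          exact mul_le_mul (abs_dot_le h x) (hfbound _) (hfnonneg _) (mul_nonneg hn0 (hW0 x))
    _ = n * M * W x := by ring
  -- pointwise decomposition and lower bound
  have hptwise : ∀ y : ℝ,
      (∑ i, h i * v i y) ^ 2 - (2 * d * M ^ 2 * S ^ 2) * n ^ 3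
        ≤ (cdfOf μY y - ∫ x, cdfOf μeps (y - β ⬝ᵥ x) ∂μX) ^ 2 := by
    intro y
    set G : ℝ := ∑ i, h i * v i y with hGdef
    set R : (Fin d → ℝ) → ℝ := fun x =>
      cdfOf μeps (y - β ⬝ᵥ x) - cdfOf μeps (y - β₀ ⬝ᵥ x)
        + (h ⬝ᵥ x) * feps (y - β₀ ⬝ᵥ x) with hRdef
    have hRb : ∀ x, |R x| ≤ M * n ^ 2 * W x := by
      intro x
      have ht := hT (y - β₀ ⬝ᵥ x) (y - β ⬝ᵥ x)
      have hba : (y - β ⬝ᵥ x) - (y - β₀ ⬝ᵥ x) = -(h ⬝ᵥ x) := by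
        rw [hdot_split x]; ring
      rw [hba] at ht
      have hR_eq : R x = cdfOf μeps (y - β ⬝ᵥ x) - cdfOf μeps (y - β₀ ⬝ᵥ x)
          - feps (y - β₀ ⬝ᵥ x) * (-(h ⬝ᵥ x)) := by
        simp only [hRdef]; ring
      rw [hR_eq]
      refine le_trans ht ?_
      rw [neg_sq]
      calc M * (h ⬝ᵥ x) ^ 2 ≤ M * (n ^ 2 * W x) :=
        mul_le_mul_of_nonneg_left (sq_dot_le h x) hM.le
      _ = M * n ^ 2 * W x := by ring
    have hRint : Integrable R μX :=
      ((hIφ β y).sub (hIφ β₀ y)).add (hIdot y)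
    have hrb : |∫ x, R x ∂μX| ≤ M * n ^ 2 * S := by
      rw [← Real.norm_eq_abs]
      calc ‖∫ x, R x ∂μX‖ ≤ ∫ x, M * n ^ 2 * W x ∂μX := by
            refine norm_integral_le_of_norm_le (hWint.const_mul (M * n ^ 2))
              (Filter.Eventually.of_forall fun x => ?_)
            rw [Real.norm_eq_abs]; exact hRb x
      _ = M * n ^ 2 * S := by rw [integral_const_mul]
    have hD : cdfOf μY y - ∫ x, cdfOf μeps (y - β ⬝ᵥ x) ∂μX = G - ∫ x, R x ∂μX := by
      rw [hcdfY y, ← integral_sub (hIφ β₀ y) (hIφ β y)]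
      have hpt : ∀ x, cdfOf μeps (y - β₀ ⬝ᵥ x) - cdfOf μeps (y - β ⬝ᵥ x)
          = (h ⬝ᵥ x) * feps (y - β₀ ⬝ᵥ x) - R x := by
        intro x; simp only [hRdef]; ring
      rw [show (fun x => cdfOf μeps (y - β₀ ⬝ᵥ x) - cdfOf μeps (y - β ⬝ᵥ x))
          = fun x => (h ⬝ᵥ x) * feps (y - β₀ ⬝ᵥ x) - R x from funext hpt,
        integral_sub (hIdot y) hRint]
      congr 1
      have hsum : ∀ x : Fin d → ℝ, (h ⬝ᵥ x) * feps (y - β₀ ⬝ᵥ x)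
          = ∑ i, h i * (x i * feps (y - β₀ ⬝ᵥ x)) := by
        intro x
        rw [dotProduct, Finset.sum_mul]
        exact Finset.sum_congr rfl fun i _ => by ring
      rw [show (fun x => (h ⬝ᵥ x) * feps (y - β₀ ⬝ᵥ x))
          = fun x => ∑ i, h i * (x i * feps (y - β₀ ⬝ᵥ x)) from funext hsum,
        integral_finset_sum _ fun i _ => (hIv i y).const_mul (h i)]
      exact Finset.sum_congr rfl fun i _ => integral_const_mul _ _
    have hGb : |G| ≤ n * (d * (M * S)) := by
      calc |G| ≤ ∑ i, |h i * v i y| := Finset.abs_sum_le_sum_abs _ _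
      _ ≤ ∑ _i : Fin d, n * (M * S) := by
            refine Finset.sum_le_sum fun i _ => ?_
            rw [abs_mul]
            exact mul_le_mul (abs_le_vnorm h i) (hvb i y) (abs_nonneg _) hn0
      _ = n * (d * (M * S)) := by
            rw [Finset.sum_const, Finset.card_univ, Fintype.card_fin, nsmul_eq_mul]; ring
    rw [hD]
    have h1 : G * (∫ x, R x ∂μX) ≤ |G| * |∫ x, R x ∂μX| := by
      rw [← abs_mul]; exact le_abs_self _
    have h2 : |G| * |∫ x, R x ∂μX| ≤ (n * (d * (M * S))) * (M * n ^ 2 * S) :=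
      mul_le_mul hGb hrb (abs_nonneg _)
        (by positivity)
    nlinarith [sq_nonneg (∫ x, R x ∂μX)]
  -- integrate the pointwise bound
  have hGmeas : StronglyMeasurable fun y => ∑ i, h i * v i y :=
    Finset.stronglyMeasurable_fun_sum _ fun i _ => (stronglyMeasurable_const.mul (hvmeas i))
  have hGint2 : Integrable (fun y => (∑ i, h i * v i y) ^ 2) μY := by
    refine Integrable.mono' (integrable_const ((n * (d * (M * S))) ^ 2))
      ((hGmeas.pow 2).aestronglyMeasurable) ?_
    refine Filter.Eventually.of_forall fun y => ?_
    rw [Real.norm_eq_abs, abs_pow]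
    have hGb : |∑ i, h i * v i y| ≤ n * (d * (M * S)) := by
      calc |∑ i, h i * v i y| ≤ ∑ i, |h i * v i y| := Finset.abs_sum_le_sum_abs _ _
      _ ≤ ∑ _i : Fin d, n * (M * S) := by
            refine Finset.sum_le_sum fun i _ => ?_
            rw [abs_mul]
            exact mul_le_mul (abs_le_vnorm h i) (hvb i y) (abs_nonneg _) hn0
      _ = n * (d * (M * S)) := by
            rw [Finset.sum_const, Finset.card_univ, Fintype.card_fin, nsmul_eq_mul]; ring
    exact pow_le_pow_left₀ (abs_nonneg _) hGb 2
  have hDmeas : AEStronglyMeasurable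
      (fun y => (cdfOf μY y - ∫ x, cdfOf μeps (y - β ⬝ᵥ x) ∂μX) ^ 2) μY := by
    have h2 : StronglyMeasurable fun y => ∫ x, cdfOf μeps (y - β ⬝ᵥ x) ∂μX := by
      have : Continuous fun p : ℝ × (Fin d → ℝ) => cdfOf μeps (p.1 - β ⬝ᵥ p.2) :=
        hFcont.comp (continuous_fst.sub ((dot_continuous β).comp continuous_snd))
      exact this.stronglyMeasurable.integral_prod_right'
    exact ((hcdfYmeas.stronglyMeasurable.sub h2).pow 2).aestronglyMeasurable
  have hDint : Integrable
      (fun y => (cdfOf μY y - ∫ x, cdfOf μeps (y - β ⬝ᵥ x) ∂μX) ^ 2) μY := by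
    refine Integrable.mono' (integrable_const 4) hDmeas ?_
    refine Filter.Eventually.of_forall fun y => ?_
    rw [Real.norm_eq_abs, abs_pow]
    have h1 : |cdfOf μY y - ∫ x, cdfOf μeps (y - β ⬝ᵥ x) ∂μX| ≤ 2 := by
      have ha : 0 ≤ cdfOf μY y := cdfOf_nonneg μY y
      have hb : cdfOf μY y ≤ 1 := cdfOf_le_one μY y
      have hc1 : 0 ≤ ∫ x, cdfOf μeps (y - β ⬝ᵥ x) ∂μX :=
        integral_nonneg fun x => cdfOf_nonneg μeps _
      have hd1 : ∫ x, cdfOf μeps (y - β ⬝ᵥ x) ∂μX ≤ 1 := by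
        calc ∫ x, cdfOf μeps (y - β ⬝ᵥ x) ∂μX ≤ ∫ _x, (1:ℝ) ∂μX :=
          integral_mono (hIφ β y) (integrable_const 1) fun x => cdfOf_le_one μeps _
        _ = 1 := by simp
      rw [abs_le]; constructor <;> linarith
    calc |cdfOf μY y - ∫ x, cdfOf μeps (y - β ⬝ᵥ x) ∂μX| ^ 2 ≤ 2 ^ 2 :=
      pow_le_pow_left₀ (abs_nonneg _) h1 2
    _ = 4 := by norm_num
  have hlowint : Integrable
      (fun y => (∑ i, h i * v i y) ^ 2 - (2 * d * M ^ 2 * S ^ 2) * n ^ 3) μY :=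
    hGint2.sub (integrable_const _)
  have hmono := integral_mono hlowint hDint hptwise
  have hvij : ∀ i j : Fin d, Integrable (fun y => v i y * v j y) μY := by
    intro i j
    refine Integrable.mono' (integrable_const ((M * S) * (M * S)))
      (((hvmeas i).mul (hvmeas j)).aestronglyMeasurable) ?_
    refine Filter.Eventually.of_forall fun y => ?_
    rw [Real.norm_eq_abs, abs_mul]
    exact mul_le_mul (hvb i y) (hvb j y) (abs_nonneg _) (by positivity)
  -- identify ∫ G² with the quadratic form
  have hU_eq : ∫ y, (∑ i, h i * v i y) ^ 2 ∂μY
      = h ⬝ᵥ (Matrix.of fun i j : Fin d =>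
          ∫ y, (∫ x, x i * feps (y - β₀ ⬝ᵥ x) ∂μX) *
            (∫ x, x j * feps (y - β₀ ⬝ᵥ x) ∂μX) ∂μY) *ᵥ h := by
    have hsq : ∀ y, (∑ i, h i * v i y) ^ 2
        = ∑ i, ∑ j, (h i * h j) * (v i y * v j y) := by
      intro y
      rw [sq, Finset.sum_mul_sum]
      exact Finset.sum_congr rfl fun i _ => Finset.sum_congr rfl fun j _ => by ring
    simp_rw [hsq]
    rw [integral_finset_sum _ fun i _ => integrable_finset_sum _
      fun j _ => (hvij i j).const_mul _]
    have : ∀ i ∈ (Finset.univ : Finset (Fin d)),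
        ∫ y, ∑ j, (h i * h j) * (v i y * v j y) ∂μY
          = ∑ j, (h i * h j) * ∫ y, v i y * v j y ∂μY := by
      intro i _
      rw [integral_finset_sum _ fun j _ => (hvij i j).const_mul _]
      exact Finset.sum_congr rfl fun j _ => integral_const_mul _ _
    rw [Finset.sum_congr rfl this]
    rw [dotProduct]
    refine Finset.sum_congr rfl fun i _ => ?_
    rw [Matrix.mulVec, dotProduct, Finset.mul_sum]
    refine Finset.sum_congr rfl fun j _ => ?_
    simp only [Matrix.of_apply, hvdef]
    ring
  -- finish
  have hquad := hcq h
  have hDpop : Dpop (cdfOf μeps) μX μY β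
      ≥ c * n ^ 2 - (2 * d * M ^ 2 * S ^ 2) * n ^ 3 := by
    unfold Dpop
    calc c * n ^ 2 - (2 * d * M ^ 2 * S ^ 2) * n ^ 3
        ≤ (h ⬝ᵥ (Matrix.of fun i j : Fin d =>
            ∫ y, (∫ x, x i * feps (y - β₀ ⬝ᵥ x) ∂μX) *
              (∫ x, x j * feps (y - β₀ ⬝ᵥ x) ∂μX) ∂μY) *ᵥ h)
            - (2 * d * M ^ 2 * S ^ 2) * n ^ 3 := by
          have := hcq h
          rw [hndef]
          linarith [hcq h]
    _ = ∫ y, ((∑ i, h i * v i y) ^ 2 - (2 * d * M ^ 2 * S ^ 2) * n ^ 3) ∂μY := by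
          rw [integral_sub hGint2 (integrable_const _), hU_eq, integral_const]
          simp
    _ ≤ ∫ y, (cdfOf μY y - ∫ x, cdfOf μeps (y - β ⬝ᵥ x) ∂μX) ^ 2 ∂μY := hmono
  have hn3 : (2 * d * M ^ 2 * S ^ 2) * n ^ 3 ≤ K * n ^ 3 := by
    have : (0:ℝ) ≤ n ^ 3 := by positivity
    nlinarith
  have hnδ : n < c / (2 * K) := hβ
  have hKn : K * n ^ 3 ≤ (c / 2) * n ^ 2 := by
    have h3 : K * n ^ 3 = (K * n) * n ^ 2 := by ring
    rw [h3]
    refine mul_le_mul_of_nonneg_right ?_ (sq_nonneg n)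
    have := mul_lt_mul_of_pos_left hnδ hK0
    calc K * n ≤ K * (c / (2 * K)) := mul_le_mul_of_nonneg_left hnδ.le hK0.le
    _ = c / 2 := by field_simp
  calc (c / 2) * n ^ 2 = c * n ^ 2 - (c / 2) * n ^ 2 := by ring
  _ ≤ c * n ^ 2 - K * n ^ 3 := by linarith
  _ ≤ c * n ^ 2 - (2 * d * M ^ 2 * S ^ 2) * n ^ 3 := by linarith
  _ ≤ Dpop (cdfOf μeps) μX μY β := hDpop
end
end

section
/- Assume F^ε admits a density f^ε ∈ C¹ with f^ε ≤ M and |(f^ε)'| ≤ M for some M > 0, and E‖X‖²_2 < ∞. Then the function ψ(β) = D_{2,F^Y}(β) is twice continuously differentiable on R^d, its gradient vanishes at β_0, and its Hessian at β_0 equals 2U, where U = ∫ (∫ x f^ε(y − β_0^T x) dF^X(x)) (∫ x^T f^ε(y − β_0^T x) dF^X(x)) dF^Y(y). -/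
open MeasureTheory ProbabilityTheory Filter Matrix
open scoped ENNReal NNReal Topology

noncomputable section

set_option maxHeartbeats 1000000
set_option synthInstance.maxHeartbeats 400000
namespace PCS
variable {d : ℕ}

instance instCA2 {d : ℕ} : ContinuousAdd ((Fin d → ℝ) →L[ℝ] (Fin d → ℝ) →L[ℝ] ℝ) :=
  (inferInstance : IsTopologicalAddGroup ((Fin d → ℝ) →L[ℝ] (Fin d → ℝ) →L[ℝ] ℝ)).toContinuousAdd

instance instCEN2 {d : ℕ} : ContinuousENorm ((Fin d → ℝ) →L[ℝ] (Fin d → ℝ) →L[ℝ] ℝ) :=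
  @SeminormedAddGroup.toContinuousENorm ((Fin d → ℝ) →L[ℝ] (Fin d → ℝ) →L[ℝ] ℝ) _

instance instCA1 {d : ℕ} : ContinuousAdd ((Fin d → ℝ) →L[ℝ] ℝ) :=
  (inferInstance : IsTopologicalAddGroup _).toContinuousAdd


lemma dot_of_sum {d : ℕ} (v w : Fin d → ℝ) (U : Fin d → Fin d → ℝ) :
    2 * (v ⬝ᵥ (Matrix.of U) *ᵥ w) = ∑ i, ∑ j, (2 * v i * w j) * U i j := by
  simp only [Matrix.mulVec, dotProduct, Matrix.of_apply, Finset.mul_sum]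
  exact Finset.sum_congr rfl fun i _ => Finset.sum_congr rfl fun j _ => by ring

/-- The continuous linear map `v ↦ v ⬝ᵥ x`. -/
def Lmap (x : Fin d → ℝ) : (Fin d → ℝ) →L[ℝ] ℝ := ∑ i, x i • ContinuousLinearMap.proj i

@[simp] lemma Lmap_apply (x v : Fin d → ℝ) : Lmap x v = v ⬝ᵥ x := by
  simp [Lmap, dotProduct, mul_comm]

/-- `∑ |x i|`. -/
def S (x : Fin d → ℝ) : ℝ := ∑ i, |x i|

lemma S_nonneg (x : Fin d → ℝ) : 0 ≤ S x :=
  Finset.sum_nonneg fun i _ => abs_nonneg _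

lemma norm_Lmap_le (x : Fin d → ℝ) : ‖Lmap x‖ ≤ S x := by
  refine ContinuousLinearMap.opNorm_le_bound _ (S_nonneg x) fun v => ?_
  rw [Lmap_apply]
  calc ‖v ⬝ᵥ x‖ ≤ ∑ i, ‖v i * x i‖ := norm_sum_le _ _
    _ ≤ ∑ i, |x i| * ‖v‖ := by
        refine Finset.sum_le_sum fun i _ => ?_
        rw [norm_mul, mul_comm]
        exact mul_le_mul_of_nonneg_left (norm_le_pi_norm v i) (norm_nonneg _)
    _ = S x * ‖v‖ := by rw [S, Finset.sum_mul]

lemma continuous_Lmap : Continuous (Lmap (d := d)) := by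
  apply continuous_finset_sum
  intro i _
  exact ((continuous_apply i)).smul continuous_const

def Kmap (x : Fin d → ℝ) : (Fin d → ℝ) →L[ℝ] (Fin d → ℝ) →L[ℝ] ℝ :=
  (Lmap x).smulRight (Lmap x)

@[simp] lemma Kmap_apply (x v w : Fin d → ℝ) : Kmap x v w = (v ⬝ᵥ x) * (w ⬝ᵥ x) := by
  simp [Kmap, smul_eq_mul, mul_comm]

lemma norm_Kmap_le (x : Fin d → ℝ) : ‖Kmap x‖ ≤ S x ^ 2 := by
  rw [Kmap, ContinuousLinearMap.norm_smulRight_apply, sq]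
  exact mul_le_mul (norm_Lmap_le x) (norm_Lmap_le x) (norm_nonneg _) (S_nonneg x)

lemma continuous_Kmap : Continuous (Kmap (d := d)) := by
  exact (isBoundedBilinearMap_smulRight (𝕜 := ℝ)).continuous.comp
    (continuous_Lmap.prodMk continuous_Lmap)


/-- All the data and facts we need about the noise density and the X distribution. -/
structure Setup (d : ℕ) where
  μX : Measure (Fin d → ℝ)
  probX : IsProbabilityMeasure μX
  Feps : ℝ → ℝ
  feps : ℝ → ℝ
  hFd : ∀ t, HasDerivAt Feps (feps t) t
  hF0 : ∀ t, 0 ≤ Feps t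
  hF1 : ∀ t, Feps t ≤ 1
  hfcont : Continuous feps
  hf'cont : Continuous (deriv feps)
  hfd : ∀ t, HasDerivAt feps (deriv feps t) t
  M : ℝ
  hM : 0 < M
  hfbound : ∀ t, |feps t| ≤ M
  hf'bound : ∀ t, |deriv feps t| ≤ M
  hS1 : Integrable S μX
  hS2 : Integrable (fun x => S x ^ 2) μX

namespace Setup

variable {d : ℕ} (c : Setup d)

instance : IsProbabilityMeasure c.μX := c.probX

lemma hFcont : Continuous c.Feps :=
  continuous_iff_continuousAt.2 fun t => (c.hFd t).differentiableAt.continuousAt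

/-- `g β y = ∫ Fᵉ(y - βᵀx) dμX`. -/
def g (β : Fin d → ℝ) (y : ℝ) : ℝ := ∫ x, c.Feps (y - β ⬝ᵥ x) ∂c.μX

/-- `G1 β y = -∫ fᵉ(y - βᵀx) • Lmap x dμX`, the `β`-derivative of `g · y`. -/
def G1 (β : Fin d → ℝ) (y : ℝ) : (Fin d → ℝ) →L[ℝ] ℝ :=
  ∫ x, (-c.feps (y - β ⬝ᵥ x)) • Lmap x ∂c.μX

/-- `G2 β y = ∫ (fᵉ)'(y - βᵀx) • Kmap x dμX`, the `β`-derivative of `G1 · y`. -/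
def G2 (β : Fin d → ℝ) (y : ℝ) : (Fin d → ℝ) →L[ℝ] (Fin d → ℝ) →L[ℝ] ℝ :=
  ∫ x, (deriv c.feps (y - β ⬝ᵥ x)) • Kmap x ∂c.μX

lemma cont_dot (β : Fin d → ℝ) : Continuous (fun x : Fin d → ℝ => β ⬝ᵥ x) := by
  apply continuous_finset_sum
  exact fun i _ => continuous_const.mul (continuous_apply i)

lemma cont_dot' (x : Fin d → ℝ) : Continuous (fun β : Fin d → ℝ => β ⬝ᵥ x) := by
  apply continuous_finset_sum
  exact fun i _ => (continuous_apply i).mul continuous_const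

/-- integrand of `G1` is integrable. -/
lemma int_G1 (β : Fin d → ℝ) (y : ℝ) :
    Integrable (fun x => (-c.feps (y - β ⬝ᵥ x)) • Lmap x) c.μX := by
  refine (c.hS1.const_mul c.M).mono' ?_ ?_
  · exact (((c.hfcont.comp ((continuous_const.sub (cont_dot β)))).neg).smul
      continuous_Lmap).aestronglyMeasurable
  · filter_upwards with x
    refine le_trans (ContinuousLinearMap.opNorm_smul_le _ _) ?_
    rw [Real.norm_eq_abs, abs_neg]
    exact mul_le_mul (c.hfbound _) (norm_Lmap_le x) (norm_nonneg _) (le_of_lt c.hM)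

lemma int_G2 (β : Fin d → ℝ) (y : ℝ) :
    Integrable (fun x => (deriv c.feps (y - β ⬝ᵥ x)) • Kmap x) c.μX := by
  refine (c.hS2.const_mul c.M).mono' (β := (Fin d → ℝ) →L[ℝ] (Fin d → ℝ) →L[ℝ] ℝ) ?_ ?_
  · exact ((c.hf'cont.comp ((continuous_const.sub (cont_dot β)))).smul
      continuous_Kmap).aestronglyMeasurable
  · filter_upwards with x
    refine le_trans (ContinuousLinearMap.opNorm_smul_le _ _) ?_
    rw [Real.norm_eq_abs]
    exact mul_le_mul (c.hf'bound _) (norm_Kmap_le x) (norm_nonneg _) (le_of_lt c.hM)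

lemma g_nonneg (β : Fin d → ℝ) (y : ℝ) : 0 ≤ c.g β y :=
  integral_nonneg fun x => c.hF0 _

lemma int_Feps (β : Fin d → ℝ) (y : ℝ) :
    Integrable (fun x => c.Feps (y - β ⬝ᵥ x)) c.μX := by
  refine (integrable_const (1 : ℝ)).mono' ?_ ?_
  · exact (c.hFcont.comp (continuous_const.sub (cont_dot β))).aestronglyMeasurable
  · filter_upwards with x
    rw [Real.norm_eq_abs, abs_of_nonneg (c.hF0 _)]
    exact c.hF1 _

lemma g_le_one (β : Fin d → ℝ) (y : ℝ) : c.g β y ≤ 1 := by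
  have := integral_mono (c.int_Feps β y) (integrable_const (1 : ℝ)) (fun x => c.hF1 _)
  simpa [g] using this

lemma abs_sub_g_le_one {F : ℝ} (hF0 : 0 ≤ F) (hF1 : F ≤ 1) (β : Fin d → ℝ) (y : ℝ) :
    |F - c.g β y| ≤ 1 := by
  rw [abs_le]
  constructor <;> nlinarith [c.g_nonneg β y, c.g_le_one β y]

def E1 : ℝ := ∫ x, S x ∂c.μX
def E2 : ℝ := ∫ x, S x ^ 2 ∂c.μX

lemma E1_nonneg : 0 ≤ c.E1 := integral_nonneg fun x => S_nonneg x
lemma E2_nonneg : 0 ≤ c.E2 := integral_nonneg fun x => sq_nonneg _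

lemma norm_G1_le (β : Fin d → ℝ) (y : ℝ) : ‖c.G1 β y‖ ≤ c.M * c.E1 := by
  rw [show c.M * c.E1 = ∫ x, c.M * S x ∂c.μX from (integral_const_mul _ _).symm]
  refine norm_integral_le_of_norm_le (c.hS1.const_mul c.M) ?_
  filter_upwards with x
  refine le_trans (ContinuousLinearMap.opNorm_smul_le _ _) ?_
  rw [Real.norm_eq_abs, abs_neg]
  exact mul_le_mul (c.hfbound _) (norm_Lmap_le x) (norm_nonneg _) (le_of_lt c.hM)

lemma norm_G2_le (β : Fin d → ℝ) (y : ℝ) : ‖c.G2 β y‖ ≤ c.M * c.E2 := by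
  rw [show c.M * c.E2 = ∫ x, c.M * S x ^ 2 ∂c.μX from (integral_const_mul _ _).symm]
  refine norm_integral_le_of_norm_le (c.hS2.const_mul c.M) ?_
  filter_upwards with x
  refine le_trans (ContinuousLinearMap.opNorm_smul_le _ _) ?_
  rw [Real.norm_eq_abs]
  exact mul_le_mul (c.hf'bound _) (norm_Kmap_le x) (norm_nonneg _) (le_of_lt c.hM)

/-- pointwise differentiation of the inner integrand in `β`. -/
lemma hasFDerivAt_inner (x : Fin d → ℝ) (y : ℝ) (β : Fin d → ℝ) :
    HasFDerivAt (fun β : Fin d → ℝ => c.Feps (y - β ⬝ᵥ x))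
      ((-c.feps (y - β ⬝ᵥ x)) • Lmap x) β := by
  have h1 : HasFDerivAt (fun β : Fin d → ℝ => y - β ⬝ᵥ x) (-(Lmap x)) β := by
    have := (hasFDerivAt_const y β).sub (Lmap x).hasFDerivAt
    exact (by simpa using this : HasFDerivAt ((fun _ => y) - ⇑(Lmap x)) (-Lmap x) β).congr_of_eventuallyEq
      (by filter_upwards with β'; simp)
  have h2 := (c.hFd (y - β ⬝ᵥ x)).comp_hasFDerivAt β h1
  rw [smul_neg, ← neg_smul] at h2
  exact h2

lemma hasFDerivAt_inner' (x : Fin d → ℝ) (y : ℝ) (β : Fin d → ℝ) :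
    HasFDerivAt (fun β : Fin d → ℝ => (-c.feps (y - β ⬝ᵥ x)) • Lmap x)
      ((deriv c.feps (y - β ⬝ᵥ x)) • Kmap x) β := by
  have h1 : HasFDerivAt (fun β : Fin d → ℝ => y - β ⬝ᵥ x) (-(Lmap x)) β := by
    have := (hasFDerivAt_const y β).sub (Lmap x).hasFDerivAt
    exact (by simpa using this : HasFDerivAt ((fun _ => y) - ⇑(Lmap x)) (-Lmap x) β).congr_of_eventuallyEq
      (by filter_upwards with β'; simp)
  have h2 : HasFDerivAt (fun β : Fin d → ℝ => -c.feps (y - β ⬝ᵥ x))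
      ((deriv c.feps (y - β ⬝ᵥ x)) • Lmap x) β := by
    have h3 := ((c.hfd (y - β ⬝ᵥ x)).comp_hasFDerivAt β h1).neg
    rw [smul_neg, neg_neg] at h3
    exact h3
  have h4 := h2.smul (hasFDerivAt_const (Lmap x) β)
  rw [smul_zero, zero_add] at h4
  have h5 : ((deriv c.feps (y - β ⬝ᵥ x)) • Lmap x).smulRight (Lmap x)
      = (deriv c.feps (y - β ⬝ᵥ x)) • Kmap x := by
    ext v w
    simp [Kmap, smul_eq_mul]
    ring
  rwa [h5] at h4

/-- differentiation under the inner integral: `∂g/∂β = G1`. -/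
lemma hasFDerivAt_g (β : Fin d → ℝ) (y : ℝ) :
    HasFDerivAt (fun β => c.g β y) (c.G1 β y) β := by
  refine hasFDerivAt_integral_of_dominated_of_fderiv_le
    (F := fun β x => c.Feps (y - β ⬝ᵥ x))
    (F' := fun β x => (-c.feps (y - β ⬝ᵥ x)) • Lmap x)
    (bound := fun x => c.M * S x) (Metric.ball_mem_nhds _ one_pos) ?_ (c.int_Feps β y) ?_ ?_
    (c.hS1.const_mul c.M) ?_
  · filter_upwards with β'
    exact (c.hFcont.comp (continuous_const.sub (cont_dot β'))).aestronglyMeasurable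
  · exact (c.int_G1 β y).aestronglyMeasurable
  · filter_upwards with x
    intro β' _
    refine le_trans (ContinuousLinearMap.opNorm_smul_le _ _) ?_
    rw [Real.norm_eq_abs, abs_neg]
    exact mul_le_mul (c.hfbound _) (norm_Lmap_le x) (norm_nonneg _) (le_of_lt c.hM)
  · filter_upwards with x
    intro β' _
    exact c.hasFDerivAt_inner x y β'

lemma hasFDerivAt_G1 (β : Fin d → ℝ) (y : ℝ) :
    HasFDerivAt (fun β => c.G1 β y) (c.G2 β y) β := by
  refine hasFDerivAt_integral_of_dominated_of_fderiv_le
    (F := fun β x => (-c.feps (y - β ⬝ᵥ x)) • Lmap x)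
    (F' := fun β x => (deriv c.feps (y - β ⬝ᵥ x)) • Kmap x)
    (bound := fun x => c.M * S x ^ 2) (Metric.ball_mem_nhds _ one_pos) ?_ (c.int_G1 β y) ?_ ?_
    (c.hS2.const_mul c.M) ?_
  · filter_upwards with β'
    exact (c.int_G1 β' y).aestronglyMeasurable
  · exact (c.int_G2 β y).aestronglyMeasurable
  · filter_upwards with x
    intro β' _
    refine le_trans (ContinuousLinearMap.opNorm_smul_le _ _) ?_
    rw [Real.norm_eq_abs]
    exact mul_le_mul (c.hf'bound _) (norm_Kmap_le x) (norm_nonneg _) (le_of_lt c.hM)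
  · filter_upwards with x
    intro β' _
    exact c.hasFDerivAt_inner' x y β'

/-- continuity in `y` of `g`. -/
lemma cont_g_y (β : Fin d → ℝ) : Continuous (fun y => c.g β y) := by
  refine continuous_of_dominated ?_ ?_ (integrable_const (1 : ℝ)) ?_
  · intro y
    exact (c.hFcont.comp (continuous_const.sub (cont_dot β))).aestronglyMeasurable
  · intro y
    filter_upwards with x
    rw [Real.norm_eq_abs, abs_of_nonneg (c.hF0 _)]
    exact c.hF1 _
  · filter_upwards with x
    exact c.hFcont.comp (continuous_sub_right _)

lemma cont_G1_y (β : Fin d → ℝ) : Continuous (fun y => c.G1 β y) := by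
  refine continuous_of_dominated ?_ ?_ (c.hS1.const_mul c.M) ?_
  · intro y
    exact (c.int_G1 β y).aestronglyMeasurable
  · intro y
    filter_upwards with x
    refine le_trans (ContinuousLinearMap.opNorm_smul_le _ _) ?_
    rw [Real.norm_eq_abs, abs_neg]
    exact mul_le_mul (c.hfbound _) (norm_Lmap_le x) (norm_nonneg _) (le_of_lt c.hM)
  · filter_upwards with x
    exact ((c.hfcont.comp (continuous_sub_right _)).neg).smul continuous_const

lemma cont_G2_y (β : Fin d → ℝ) : Continuous (fun y => c.G2 β y) := by
  refine continuous_of_dominated ?_ ?_ (c.hS2.const_mul c.M) ?_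
  · intro y
    exact (c.int_G2 β y).aestronglyMeasurable
  · intro y
    filter_upwards with x
    refine le_trans (ContinuousLinearMap.opNorm_smul_le _ _) ?_
    rw [Real.norm_eq_abs]
    exact mul_le_mul (c.hf'bound _) (norm_Kmap_le x) (norm_nonneg _) (le_of_lt c.hM)
  · filter_upwards with x
    exact (c.hf'cont.comp (continuous_sub_right _)).smul continuous_const

lemma cont_G2_β (y : ℝ) : Continuous (fun β => c.G2 β y) := by
  refine continuous_of_dominated ?_ ?_ (c.hS2.const_mul c.M) ?_
  · intro β
    exact (c.int_G2 β y).aestronglyMeasurable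
  · intro β
    filter_upwards with x
    refine le_trans (ContinuousLinearMap.opNorm_smul_le _ _) ?_
    rw [Real.norm_eq_abs]
    exact mul_le_mul (c.hf'bound _) (norm_Kmap_le x) (norm_nonneg _) (le_of_lt c.hM)
  · filter_upwards with x
    exact (c.hf'cont.comp (continuous_const.sub (cont_dot' x))).smul continuous_const

end Setup
namespace Setup

variable {d : ℕ} (c : Setup d) (μY : Measure ℝ) (FY : ℝ → ℝ)
variable {μY' : Measure ℝ}

/-- The derivative of `ψ`. -/
def P1 (β : Fin d → ℝ) : (Fin d → ℝ) →L[ℝ] ℝ :=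
  ∫ y, (-(2 * (FY y - c.g β y))) • c.G1 β y ∂μY

/-- Integrand of the second derivative of `ψ`. -/
def Q (β : Fin d → ℝ) (y : ℝ) : (Fin d → ℝ) →L[ℝ] (Fin d → ℝ) →L[ℝ] ℝ :=
  (-(2 * (FY y - c.g β y))) • c.G2 β y + ((2:ℝ) • c.G1 β y).smulRight (c.G1 β y)

/-- The second derivative of `ψ`. -/
def P2 (β : Fin d → ℝ) : (Fin d → ℝ) →L[ℝ] (Fin d → ℝ) →L[ℝ] ℝ :=
  ∫ y, c.Q FY β y ∂μY

variable {μY FY}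
variable [IsProbabilityMeasure μY] (hFYm : Measurable FY)
  (hFY0 : ∀ y, 0 ≤ FY y) (hFY1 : ∀ y, FY y ≤ 1)
include hFYm hFY0 hFY1

/-- strong measurability of the `P1` integrand. -/
lemma aesm_P1 (β : Fin d → ℝ) :
    AEStronglyMeasurable (fun y => (-(2 * (FY y - c.g β y))) • c.G1 β y) μY := by
  refine AEStronglyMeasurable.smul (𝕜 := ℝ) ?_ (c.cont_G1_y β).aestronglyMeasurable
  exact (((hFYm.sub (c.cont_g_y β).measurable).const_mul 2).neg).aestronglyMeasurable

lemma norm_P1_integrand_le (β : Fin d → ℝ) (y : ℝ) :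
    ‖(-(2 * (FY y - c.g β y))) • c.G1 β y‖ ≤ 2 * (c.M * c.E1) := by
  refine le_trans (ContinuousLinearMap.opNorm_smul_le _ _) ?_
  rw [Real.norm_eq_abs, abs_neg, abs_mul, abs_two]
  have h1 : |FY y - c.g β y| ≤ 1 := c.abs_sub_g_le_one (hFY0 y) (hFY1 y) β y
  have h2 := c.norm_G1_le β y
  have h3 : (0:ℝ) ≤ c.M * c.E1 := mul_nonneg c.hM.le c.E1_nonneg
  nlinarith [norm_nonneg (c.G1 β y), abs_nonneg (FY y - c.g β y)]

lemma int_P1_integrand (β : Fin d → ℝ) :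
    Integrable (fun y => (-(2 * (FY y - c.g β y))) • c.G1 β y) μY := by
  refine (integrable_const (2 * (c.M * c.E1))).mono' (c.aesm_P1 hFYm hFY0 hFY1 β) ?_
  filter_upwards with y
  exact c.norm_P1_integrand_le hFYm hFY0 hFY1 β y

/-- pointwise `β`-derivative of the scalar factor. -/
lemma hasFDerivAt_scalar (β : Fin d → ℝ) (y : ℝ) :
    HasFDerivAt (fun β => -(2 * (FY y - c.g β y))) ((2:ℝ) • c.G1 β y) β := by
  have h := (((hasFDerivAt_const (FY y) β).sub (c.hasFDerivAt_g β y)).const_mul (2:ℝ)).neg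
  rw [zero_sub, smul_neg, neg_neg] at h
  exact h

/-- pointwise `β`-derivative of the `ψ` integrand. -/
lemma hasFDerivAt_sq (β : Fin d → ℝ) (y : ℝ) :
    HasFDerivAt (fun β => (FY y - c.g β y) ^ 2)
      ((-(2 * (FY y - c.g β y))) • c.G1 β y) β := by
  have h := (hasFDerivAt_const (FY y) β).sub (c.hasFDerivAt_g β y)
  rw [zero_sub] at h
  have h2 := h.mul h
  have h3 : HasFDerivAt (fun β => (FY y - c.g β y) ^ 2)
      ((FY y - c.g β y) • -c.G1 β y + (FY y - c.g β y) • -c.G1 β y) β :=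
    h2.congr_of_eventuallyEq (by filter_upwards with β'; simp only [Pi.mul_apply, Pi.sub_apply]; ring)
  refine h3.congr_fderiv ?_
  ext v
  simp only [ContinuousLinearMap.add_apply, ContinuousLinearMap.smul_apply,
    ContinuousLinearMap.neg_apply, smul_eq_mul]
  ring

/-- pointwise `β`-derivative of the `P1` integrand. -/
lemma hasFDerivAt_P1_integrand (β : Fin d → ℝ) (y : ℝ) :
    HasFDerivAt (fun β => (-(2 * (FY y - c.g β y))) • c.G1 β y) (c.Q FY β y) β :=
  (c.hasFDerivAt_scalar hFYm hFY0 hFY1 β y).smul (c.hasFDerivAt_G1 β y)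

lemma norm_Q_le (β : Fin d → ℝ) (y : ℝ) :
    ‖c.Q FY β y‖ ≤ 2 * (c.M * c.E2) + 2 * (c.M * c.E1) * (c.M * c.E1) := by
  unfold Q
  refine le_trans (ContinuousLinearMap.opNorm_add_le _ _) (add_le_add ?_ ?_)
  · refine le_trans (ContinuousLinearMap.opNorm_smul_le _ _) ?_
    rw [Real.norm_eq_abs, abs_neg, abs_mul, abs_two]
    have h1 : |FY y - c.g β y| ≤ 1 := c.abs_sub_g_le_one (hFY0 y) (hFY1 y) β y
    have h2 := c.norm_G2_le β y
    have h3 : (0:ℝ) ≤ c.M * c.E2 := mul_nonneg c.hM.le c.E2_nonneg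
    nlinarith [norm_nonneg (c.G2 β y), abs_nonneg (FY y - c.g β y)]
  · rw [ContinuousLinearMap.norm_smulRight_apply]
    have h2 := c.norm_G1_le β y
    have h4 : ‖(2:ℝ) • c.G1 β y‖ ≤ 2 * (c.M * c.E1) := by
      refine le_trans (ContinuousLinearMap.opNorm_smul_le _ _) ?_
      rw [Real.norm_eq_abs, abs_two]
      nlinarith
    have h3 : (0:ℝ) ≤ c.M * c.E1 := mul_nonneg c.hM.le c.E1_nonneg
    exact mul_le_mul h4 h2 (norm_nonneg _) (by positivity)

lemma aesm_Q (β : Fin d → ℝ) : AEStronglyMeasurable (c.Q FY β) μY := by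
  have h1 : AEStronglyMeasurable (fun y => (-(2 * (FY y - c.g β y))) • c.G2 β y) μY := by
    refine AEStronglyMeasurable.smul (𝕜 := ℝ) ?_ (c.cont_G2_y β).aestronglyMeasurable
    exact (((hFYm.sub (c.cont_g_y β).measurable).const_mul 2).neg).aestronglyMeasurable
  have h2 : Continuous (fun y => ((2:ℝ) • c.G1 β y).smulRight (c.G1 β y)) :=
    (isBoundedBilinearMap_smulRight (𝕜 := ℝ)).continuous.comp
      (((c.cont_G1_y β).const_smul (2:ℝ)).prodMk (c.cont_G1_y β))
  exact h1.add h2.aestronglyMeasurable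

lemma int_Q (β : Fin d → ℝ) : Integrable (c.Q FY β) μY := by
  refine (integrable_const (2 * (c.M * c.E2) + 2 * (c.M * c.E1) * (c.M * c.E1))).mono' (β := (Fin d → ℝ) →L[ℝ] (Fin d → ℝ) →L[ℝ] ℝ)
    (c.aesm_Q hFYm hFY0 hFY1 β) ?_
  filter_upwards with y
  exact c.norm_Q_le hFYm hFY0 hFY1 β y

/-- Differentiation under the outer integral: `ψ' = P1`. -/
lemma hasFDerivAt_psi (β : Fin d → ℝ) :
    HasFDerivAt (fun β => ∫ y, (FY y - c.g β y) ^ 2 ∂μY) (c.P1 μY FY β) β := by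
  refine hasFDerivAt_integral_of_dominated_of_fderiv_le
    (F := fun β y => (FY y - c.g β y) ^ 2)
    (F' := fun β y => (-(2 * (FY y - c.g β y))) • c.G1 β y)
    (bound := fun _ => 2 * (c.M * c.E1)) (Metric.ball_mem_nhds _ one_pos) ?_ ?_ ?_ ?_ (integrable_const _) ?_
  · filter_upwards with β'
    exact ((hFYm.sub (c.cont_g_y β').measurable).pow_const 2).aestronglyMeasurable
  · refine (integrable_const (1:ℝ)).mono'
      ((hFYm.sub (c.cont_g_y β).measurable).pow_const 2).aestronglyMeasurable ?_
    filter_upwards with y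
    rw [Real.norm_eq_abs, abs_pow, pow_two]
    have h1 : |FY y - c.g β y| ≤ 1 := c.abs_sub_g_le_one (hFY0 y) (hFY1 y) β y
    nlinarith [abs_nonneg (FY y - c.g β y)]
  · exact c.aesm_P1 hFYm hFY0 hFY1 β
  · filter_upwards with y
    intro β' _
    exact c.norm_P1_integrand_le hFYm hFY0 hFY1 β' y
  · filter_upwards with y
    intro β' _
    exact c.hasFDerivAt_sq hFYm hFY0 hFY1 β' y

/-- Differentiation under the outer integral again: `ψ'' = P2`. -/
lemma hasFDerivAt_P1 (β : Fin d → ℝ) :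
    HasFDerivAt (c.P1 μY FY) (c.P2 μY FY β) β := by
  refine hasFDerivAt_integral_of_dominated_of_fderiv_le
    (F := fun β y => (-(2 * (FY y - c.g β y))) • c.G1 β y)
    (F' := fun β y => c.Q FY β y)
    (bound := fun _ => 2 * (c.M * c.E2) + 2 * (c.M * c.E1) * (c.M * c.E1))
    (Metric.ball_mem_nhds _ one_pos) ?_ (c.int_P1_integrand hFYm hFY0 hFY1 β) ?_ ?_ (integrable_const _) ?_
  · filter_upwards with β'
    exact c.aesm_P1 hFYm hFY0 hFY1 β'
  · exact c.aesm_Q hFYm hFY0 hFY1 β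
  · filter_upwards with y
    intro β' _
    exact c.norm_Q_le hFYm hFY0 hFY1 β' y
  · filter_upwards with y
    intro β' _
    exact c.hasFDerivAt_P1_integrand hFYm hFY0 hFY1 β' y

/-- Continuity of the second derivative. -/
lemma cont_P2 : Continuous (c.P2 μY FY) := by
  unfold P2
  refine continuous_of_dominated
    (bound := fun _ => 2 * (c.M * c.E2) + 2 * (c.M * c.E1) * (c.M * c.E1))
    (fun β => c.aesm_Q hFYm hFY0 hFY1 β) ?_ (integrable_const _) ?_
  · intro β
    filter_upwards with y
    exact c.norm_Q_le hFYm hFY0 hFY1 β y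
  · filter_upwards with y
    have h1 : Continuous fun β => c.g β y :=
      continuous_iff_continuousAt.2 fun β => (c.hasFDerivAt_g β y).differentiableAt.continuousAt
    have h2 : Continuous fun β => c.G1 β y :=
      continuous_iff_continuousAt.2 fun β => (c.hasFDerivAt_G1 β y).differentiableAt.continuousAt
    have h3 : Continuous fun β => c.G2 β y := c.cont_G2_β y
    unfold Q
    refine Continuous.add ?_ ?_
    · exact ((continuous_const.mul (continuous_const.sub h1)).neg).smul h3
    · exact (isBoundedBilinearMap_smulRight (𝕜 := ℝ)).continuous.comp
        ((h2.const_smul (2:ℝ)).prodMk h2)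

end Setup
namespace Setup

variable {d : ℕ} (c : Setup d)

lemma int_xi (β : Fin d → ℝ) (y : ℝ) (i : Fin d) :
    Integrable (fun x => x i * c.feps (y - β ⬝ᵥ x)) c.μX := by
  refine (c.hS1.const_mul c.M).mono' ?_ ?_
  · exact ((continuous_apply i).mul
      (c.hfcont.comp (continuous_const.sub (cont_dot β)))).aestronglyMeasurable
  · filter_upwards with x
    rw [Real.norm_eq_abs, abs_mul]
    have h1 : |x i| ≤ S x :=
      Finset.single_le_sum (f := fun i => |x i|) (fun _ _ => abs_nonneg _) (Finset.mem_univ i)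
    calc |x i| * |c.feps (y - β ⬝ᵥ x)| ≤ S x * c.M :=
          mul_le_mul h1 (c.hfbound _) (abs_nonneg _) (S_nonneg x)
      _ = c.M * S x := mul_comm _ _

/-- `a β y i = ∫ xᵢ fᵉ(y - βᵀx) dμX`. -/
def a_ (β : Fin d → ℝ) (y : ℝ) (i : Fin d) : ℝ := ∫ x, x i * c.feps (y - β ⬝ᵥ x) ∂c.μX

lemma G1_apply (β : Fin d → ℝ) (y : ℝ) (v : Fin d → ℝ) :
    c.G1 β y v = -∑ i, v i * c.a_ β y i := by
  rw [G1, ContinuousLinearMap.integral_apply (c.int_G1 β y)]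
  have h1 : (fun x => ((-c.feps (y - β ⬝ᵥ x)) • Lmap x) v)
      = fun x => ∑ i, -(v i * (x i * c.feps (y - β ⬝ᵥ x))) := by
    funext x
    simp only [ContinuousLinearMap.smul_apply, Lmap_apply, smul_eq_mul]
    rw [show v ⬝ᵥ x = ∑ i, v i * x i from rfl, Finset.mul_sum]
    exact Finset.sum_congr rfl fun i _ => by ring
  have hi : ∀ i ∈ Finset.univ, Integrable
      (fun x => -(v i * (x i * c.feps (y - β ⬝ᵥ x)))) c.μX :=
    fun i _ => ((c.int_xi β y i).const_mul (v i)).neg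
  rw [h1, integral_finset_sum _ hi, ← Finset.sum_neg_distrib]
  refine Finset.sum_congr rfl fun i _ => ?_
  rw [integral_neg, integral_const_mul]
  rfl

lemma cont_a_y (β : Fin d → ℝ) (i : Fin d) : Continuous (fun y => c.a_ β y i) := by
  refine continuous_of_dominated (bound := fun x => c.M * S x) ?_ ?_ (c.hS1.const_mul c.M) ?_
  · intro y
    exact ((continuous_apply i).mul
      (c.hfcont.comp (continuous_const.sub (cont_dot β)))).aestronglyMeasurable
  · intro y
    filter_upwards with x
    rw [Real.norm_eq_abs, abs_mul]
    have h1 : |x i| ≤ S x :=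
      Finset.single_le_sum (f := fun i => |x i|) (fun _ _ => abs_nonneg _) (Finset.mem_univ i)
    calc |x i| * |c.feps (y - β ⬝ᵥ x)| ≤ S x * c.M :=
          mul_le_mul h1 (c.hfbound _) (abs_nonneg _) (S_nonneg x)
      _ = c.M * S x := mul_comm _ _
  · filter_upwards with x
    exact continuous_const.mul (c.hfcont.comp (continuous_sub_right _))

lemma abs_a_le (β : Fin d → ℝ) (y : ℝ) (i : Fin d) : |c.a_ β y i| ≤ c.M * c.E1 := by
  have h := norm_integral_le_of_norm_le (μ := c.μX)
    (f := fun x => x i * c.feps (y - β ⬝ᵥ x)) (c.hS1.const_mul c.M) ?_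
  · rw [integral_const_mul] at h
    exact h
  · filter_upwards with x
    rw [Real.norm_eq_abs, abs_mul]
    have h1 : |x i| ≤ S x :=
      Finset.single_le_sum (f := fun i => |x i|) (fun _ _ => abs_nonneg _) (Finset.mem_univ i)
    calc |x i| * |c.feps (y - β ⬝ᵥ x)| ≤ S x * c.M :=
          mul_le_mul h1 (c.hfbound _) (abs_nonneg _) (S_nonneg x)
      _ = c.M * S x := mul_comm _ _

variable {μY : Measure ℝ} {FY : ℝ → ℝ} [IsProbabilityMeasure μY]

lemma int_aa (β : Fin d → ℝ) (i j : Fin d) :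
    Integrable (fun y => c.a_ β y i * c.a_ β y j) μY := by
  refine (integrable_const ((c.M * c.E1) * (c.M * c.E1))).mono'
    ((c.cont_a_y β i).mul (c.cont_a_y β j)).aestronglyMeasurable ?_
  filter_upwards with y
  rw [Real.norm_eq_abs, abs_mul]
  exact mul_le_mul (c.abs_a_le β y i) (c.abs_a_le β y j) (abs_nonneg _)
    (mul_nonneg c.hM.le c.E1_nonneg)

variable (hFYm : Measurable FY) (hFY0 : ∀ y, 0 ≤ FY y) (hFY1 : ∀ y, FY y ≤ 1)

lemma P1_base {β₀ : Fin d → ℝ} (hkey : ∀ y, FY y = c.g β₀ y) : c.P1 μY FY β₀ = 0 := by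
  unfold P1
  have h : (fun y => (-(2 * (FY y - c.g β₀ y))) • c.G1 β₀ y)
      = fun _ => (0 : (Fin d → ℝ) →L[ℝ] ℝ) := by
    funext y
    rw [hkey y]
    simp
  rw [h, integral_zero]

include hFYm hFY0 hFY1 in
lemma P2_base_apply {β₀ : Fin d → ℝ} (hkey : ∀ y, FY y = c.g β₀ y) (v w : Fin d → ℝ) :
    c.P2 μY FY β₀ v w
      = ∑ i, ∑ j, (2 * v i * w j) * ∫ y, c.a_ β₀ y i * c.a_ β₀ y j ∂μY := by
  have h0 : c.P2 μY FY β₀ v w = ∫ y, c.Q FY β₀ y v w ∂μY := by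
    unfold P2
    rw [ContinuousLinearMap.integral_apply (c.int_Q hFYm hFY0 hFY1 β₀),
      ContinuousLinearMap.integral_apply ((c.int_Q hFYm hFY0 hFY1 β₀).apply_continuousLinearMap v)]
  have h2 : ∀ y, c.Q FY β₀ y v w
      = ∑ i, ∑ j, (2 * v i * w j) * (c.a_ β₀ y i * c.a_ β₀ y j) := by
    intro y
    have hQ : c.Q FY β₀ y = ((2:ℝ) • c.G1 β₀ y).smulRight (c.G1 β₀ y) := by
      unfold Q
      rw [hkey y]
      simp
    rw [hQ]
    simp only [ContinuousLinearMap.smulRight_apply, ContinuousLinearMap.smul_apply, smul_eq_mul]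
    rw [c.G1_apply β₀ y v, c.G1_apply β₀ y w]
    calc (2 * -∑ i, v i * c.a_ β₀ y i) * -∑ j, w j * c.a_ β₀ y j
        = 2 * ((∑ i, v i * c.a_ β₀ y i) * (∑ j, w j * c.a_ β₀ y j)) := by ring
      _ = 2 * ∑ i, ∑ j, (v i * c.a_ β₀ y i) * (w j * c.a_ β₀ y j) := by
          rw [Finset.sum_mul_sum]
      _ = ∑ i, ∑ j, (2 * v i * w j) * (c.a_ β₀ y i * c.a_ β₀ y j) := by
          rw [Finset.mul_sum]
          refine Finset.sum_congr rfl fun i _ => ?_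
          rw [Finset.mul_sum]
          exact Finset.sum_congr rfl fun j _ => by ring
  rw [h0]
  simp_rw [h2]
  rw [integral_finset_sum _ (fun i _ =>
    integrable_finset_sum _ (fun j _ => ((c.int_aa β₀ i j).const_mul (2 * v i * w j))))]
  refine Finset.sum_congr rfl fun i _ => ?_
  rw [integral_finset_sum _ (fun j _ => ((c.int_aa β₀ i j).const_mul (2 * v i * w j)))]
  exact Finset.sum_congr rfl fun j _ => integral_const_mul _ _

end Setup

end PCS

/-- **Smoothness of the population criterion.**  If the noise density `f^ε`
is `C¹` with `f^ε ≤ M` and `|(f^ε)'| ≤ M`, and `E‖X‖² < ∞`, then `ψ = D_{2,F^Y}` is twice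
continuously differentiable on `ℝ^d`, its gradient vanishes at `β₀`, and its Hessian at
`β₀` is `2U`. -/
theorem population_criterion_smoothness
    {d : ℕ} (μX : Measure (Fin d → ℝ)) (μeps μY : Measure ℝ)
    [IsProbabilityMeasure μX] [IsProbabilityMeasure μeps]
    (β₀ : Fin d → ℝ) (hmodel : UnlinkedModel μX μeps β₀ μY)
    (feps : ℝ → ℝ) (hfnonneg : ∀ t, 0 ≤ feps t)
    (hdensity : μeps = volume.withDensity fun t => ENNReal.ofReal (feps t))
    (hC1 : ContDiff ℝ 1 feps)
    (M : ℝ) (hM : 0 < M) (hfbound : ∀ t, feps t ≤ M)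
    (hf'bound : ∀ t, |deriv feps t| ≤ M)
    (hX2 : Integrable (fun x : Fin d → ℝ => ∑ i, x i ^ 2) μX) :
    ContDiff ℝ 2 (fun β : Fin d → ℝ => Dpop (cdfOf μeps) μX μY β) ∧
      fderiv ℝ (fun β : Fin d → ℝ => Dpop (cdfOf μeps) μX μY β) β₀ = 0 ∧
      ∀ v w : Fin d → ℝ,
        fderiv ℝ (fderiv ℝ fun β : Fin d → ℝ => Dpop (cdfOf μeps) μX μY β) β₀ v w
          = 2 * (v ⬝ᵥ (Matrix.of fun i j : Fin d =>
              ∫ y, (∫ x, x i * feps (y - β₀ ⬝ᵥ x) ∂μX) *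
                (∫ x, x j * feps (y - β₀ ⬝ᵥ x) ∂μX) ∂μY) *ᵥ w) := by
  classical
  have hTmeas : Measurable (fun q : (Fin d → ℝ) × ℝ => β₀ ⬝ᵥ q.1 + q.2) :=
    (((PCS.Setup.cont_dot β₀).comp continuous_fst).add continuous_snd).measurable
  have hm : μY = Measure.map (fun q : (Fin d → ℝ) × ℝ => β₀ ⬝ᵥ q.1 + q.2) (μX.prod μeps) :=
    hmodel
  haveI hprobY : IsProbabilityMeasure μY := by
    rw [hm]; exact Measure.isProbabilityMeasure_map hTmeas.aemeasurable
  have hfm : Continuous feps := hC1.continuous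
  have hfint : Integrable feps volume := by
    constructor
    · exact hfm.aestronglyMeasurable
    · rw [hasFiniteIntegral_iff_ofReal (Filter.Eventually.of_forall hfnonneg)]
      have h1 : ∫⁻ t, ENNReal.ofReal (feps t) = 1 := by
        have h2 := measure_univ (μ := μeps)
        rw [hdensity, withDensity_apply _ MeasurableSet.univ, Measure.restrict_univ] at h2
        exact h2
      rw [h1]
      exact ENNReal.one_lt_top
  have hFepsInt : ∀ t, cdfOf μeps t = ∫ s in Set.Iic t, feps s := by
    intro t
    rw [cdfOf, hdensity, withDensity_apply _ measurableSet_Iic,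
      MeasureTheory.integral_eq_lintegral_of_nonneg_ae
        (Filter.Eventually.of_forall fun s => hfnonneg s) hfm.aestronglyMeasurable.restrict]
  have hFd : ∀ t, HasDerivAt (cdfOf μeps) (feps t) t := by
    intro t
    have key : ∀ u, cdfOf μeps u = cdfOf μeps t + ∫ s in t..u, feps s := by
      intro u
      rw [hFepsInt u, hFepsInt t,
        ← intervalIntegral.integral_Iic_sub_Iic hfint.integrableOn hfint.integrableOn]
      ring
    have hd0 : HasDerivAt (fun u => ∫ s in t..u, feps s) (feps t) t :=
      (intervalIntegral.integral_hasStrictDerivAt_right (hfint.intervalIntegrable)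
        (hfm.stronglyMeasurable.stronglyMeasurableAtFilter) hfm.continuousAt).hasDerivAt
    exact (hd0.const_add (cdfOf μeps t)).congr_of_eventuallyEq
      (Filter.Eventually.of_forall key)
  have hF0 : ∀ t, 0 ≤ cdfOf μeps t := fun _ => ENNReal.toReal_nonneg
  have hF1 : ∀ t, cdfOf μeps t ≤ 1 := by
    intro t
    rw [cdfOf, ← ENNReal.toReal_one]
    exact ENNReal.toReal_mono ENNReal.one_ne_top prob_le_one
  have hcontS : Continuous (PCS.S (d := d)) :=
    continuous_finset_sum _ fun i _ => (continuous_apply i).abs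
  have hS1 : Integrable PCS.S μX := by
    refine (hX2.add (integrable_const (d : ℝ))).mono' hcontS.aestronglyMeasurable ?_
    filter_upwards with x
    rw [Real.norm_eq_abs, abs_of_nonneg (PCS.S_nonneg x)]
    calc PCS.S x ≤ ∑ i, (x i ^ 2 + 1) := by
          refine Finset.sum_le_sum fun i _ => ?_
          nlinarith [sq_abs (x i), abs_nonneg (x i)]
      _ = (∑ i, x i ^ 2) + (d : ℝ) := by
          rw [Finset.sum_add_distrib, Finset.sum_const, Finset.card_univ]
          simp
  have hS2 : Integrable (fun x => PCS.S x ^ 2) μX := by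
    refine (hX2.const_mul (d : ℝ)).mono' (hcontS.pow 2).aestronglyMeasurable ?_
    filter_upwards with x
    rw [Real.norm_eq_abs, abs_of_nonneg (sq_nonneg _)]
    have h := Finset.sum_mul_sq_le_sq_mul_sq Finset.univ (fun _ => (1:ℝ)) (fun i => |x i|)
    simp only [one_mul, one_pow, Finset.sum_const, Finset.card_univ, Fintype.card_fin,
      nsmul_eq_mul, sq_abs] at h
    simpa [PCS.S] using h
  let c : PCS.Setup d :=
    { μX := μX, probX := inferInstance, Feps := cdfOf μeps, feps := feps,
      hFd := hFd, hF0 := hF0, hF1 := hF1, hfcont := hfm,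
      hf'cont := hC1.continuous_deriv le_rfl,
      hfd := fun t => ((hC1.differentiable one_ne_zero) t).hasDerivAt,
      M := M, hM := hM,
      hfbound := fun t => by rw [abs_of_nonneg (hfnonneg t)]; exact hfbound t,
      hf'bound := hf'bound, hS1 := hS1, hS2 := hS2 }
  have hFYm : Measurable (cdfOf μY) := by
    refine Monotone.measurable fun s t hst => ?_
    exact ENNReal.toReal_mono (measure_ne_top μY _) (measure_mono (Set.Iic_subset_Iic.2 hst))
  have hFY0 : ∀ y, 0 ≤ cdfOf μY y := fun _ => ENNReal.toReal_nonneg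
  have hFY1 : ∀ y, cdfOf μY y ≤ 1 := by
    intro y
    rw [cdfOf, ← ENNReal.toReal_one]
    exact ENNReal.toReal_mono ENNReal.one_ne_top prob_le_one
  have hmeasIic : Measurable fun t : ℝ => μeps (Set.Iic t) :=
    Monotone.measurable fun s t hst => measure_mono (Set.Iic_subset_Iic.2 hst)
  have hkey : ∀ y, cdfOf μY y = c.g β₀ y := by
    intro y
    have h1 : μY (Set.Iic y) = ∫⁻ x, μeps (Set.Iic (y - β₀ ⬝ᵥ x)) ∂μX := by
      rw [hm, Measure.map_apply hTmeas measurableSet_Iic,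
        Measure.prod_apply (hTmeas measurableSet_Iic)]
      refine lintegral_congr fun x => ?_
      congr 1
      ext e
      simp only [Set.mem_preimage, Set.mem_Iic]
      constructor <;> intro h <;> linarith
    have hmx : Measurable fun x : Fin d → ℝ => μeps (Set.Iic (y - β₀ ⬝ᵥ x)) :=
      hmeasIic.comp ((continuous_const.sub (PCS.Setup.cont_dot β₀)).measurable)
    rw [cdfOf, h1, ← MeasureTheory.integral_toReal hmx.aemeasurable
      (Filter.Eventually.of_forall fun x => measure_lt_top μeps _)]
    rfl
  have hψ : (fun β : Fin d → ℝ => Dpop (cdfOf μeps) μX μY β)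
      = fun β => ∫ y, (cdfOf μY y - c.g β y) ^ 2 ∂μY := rfl
  have hDpsi : ∀ β, HasFDerivAt (fun β : Fin d → ℝ => Dpop (cdfOf μeps) μX μY β)
      (c.P1 μY (cdfOf μY) β) β := by
    intro β
    rw [hψ]
    exact c.hasFDerivAt_psi hFYm hFY0 hFY1 β
  have hfderEq : fderiv ℝ (fun β : Fin d → ℝ => Dpop (cdfOf μeps) μX μY β)
      = c.P1 μY (cdfOf μY) := funext fun β => (hDpsi β).fderiv
  have hfderEq2 : fderiv ℝ (c.P1 μY (cdfOf μY)) = c.P2 μY (cdfOf μY) :=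
    funext fun β => (c.hasFDerivAt_P1 hFYm hFY0 hFY1 β).fderiv
  refine ⟨?_, ?_, ?_⟩
  · -- twice continuous differentiability
    rw [show (2 : WithTop ℕ∞) = 1 + 1 by norm_num, contDiff_succ_iff_fderiv]
    refine ⟨fun β => (hDpsi β).differentiableAt, by simp, ?_⟩
    rw [hfderEq, contDiff_one_iff_fderiv]
    refine ⟨fun β => (c.hasFDerivAt_P1 hFYm hFY0 hFY1 β).differentiableAt, ?_⟩
    rw [hfderEq2]
    exact c.cont_P2 hFYm hFY0 hFY1
  · rw [hfderEq]
    exact c.P1_base hkey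
  · intro v w
    show _ = 2 * (v ⬝ᵥ (Matrix.of fun i j : Fin d =>
        ∫ y, c.a_ β₀ y i * c.a_ β₀ y j ∂μY) *ᵥ w)
    rw [hfderEq, hfderEq2, c.P2_base_apply hFYm hFY0 hFY1 hkey v w,
      PCS.dot_of_sum v w (fun i j => ∫ y, c.a_ β₀ y i * c.a_ β₀ y j ∂μY)]
end
end
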